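/- arXiv:1806.10660 — 3 statements merged into one kernel-verified Lean document; each statement's English description precedes it below -/
import Mathlib

section
/- Let f be an interval function: f(a) = 1 if α ≤ N₁(a) < β and f(a) = 0 otherwise, where 1 ≤ α < β ≤ n, giving three nonempty blocks M¹ = {a : N₁(a) < α}, M² = {a : α ≤ N₁(a) < β}, M³ = {a : N₁(a) ≥ β}. Then for every positive cost vector c, V(f) = V(g): the optimal expected verification cost of the Boolean function f equals the optimal expected verification cost of its block identification function g. -/
open Finset

/-- Number of true bits of an assignment. -/
def N1 {n : ℕ} (a : Fin n → Bool) : ℕ :=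
  (Finset.univ.filter (fun i => a i = true)).card

/-- Probability of an assignment. -/
noncomputable def pr {n : ℕ} (p : Fin n → ℝ) (a : Fin n → Bool) : ℝ :=
  ∏ i, if a i then p i else 1 - p i
/-- Binary decision trees over `n` bits, with natural-number leaf labels. -/
inductive DTree (n : ℕ) : Type where
  | leaf : ℕ → DTree n
  | node : Fin n → DTree n → DTree n → DTree n

namespace DTree

/-- Output of the tree on assignment `a`. -/
def eval {n : ℕ} : DTree n → (Fin n → Bool) → ℕ
  | .leaf v, _ => v
  | .node i t0 t1, a => if a i then eval t1 a else eval t0 a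

/-- Total cost of the queries made on assignment `a`. -/
noncomputable def cost {n : ℕ} (c : Fin n → ℝ) : DTree n → (Fin n → Bool) → ℝ
  | .leaf _, _ => 0
  | .node i t0 t1, a => c i + (if a i then cost c t1 a else cost c t0 a)

/-- The list of indices queried on assignment `a`, in order. -/
def path {n : ℕ} : DTree n → (Fin n → Bool) → List (Fin n)
  | .leaf _, _ => []
  | .node i t0 t1, a => i :: (if a i then path t1 a else path t0 a)

/-- No index occurs twice on any root-to-leaf path (given already-used indices). -/
def Proper {n : ℕ} : DTree n → Finset (Fin n) → Prop
  | .leaf _, _ => True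
  | .node i t0 t1, used =>
      i ∉ used ∧ Proper t0 (insert i used) ∧ Proper t1 (insert i used)

/-- Every root-to-leaf path queries all `n` indices (and no repeats). -/
def Full {n : ℕ} : DTree n → Finset (Fin n) → Prop
  | .leaf _, used => used = Finset.univ
  | .node i t0 t1, used =>
      i ∉ used ∧ Full t0 (insert i used) ∧ Full t1 (insert i used)

end DTree
/-- Minimum, over decision trees evaluating `h`, of the `ℓ`-cost of the tree:
the expected cost restricted to assignments `a` with `h a = ℓ`. -/
noncomputable def minLCost {n : ℕ} (p c : Fin n → ℝ) (h : (Fin n → Bool) → ℕ)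
    (ℓ : ℕ) : ℝ :=
  sInf {x : ℝ | ∃ T : DTree n, T.Proper ∅ ∧ (∀ a, T.eval a = h a) ∧
    x = ∑ a ∈ Finset.univ.filter (fun a => h a = ℓ), T.cost c a * pr p a}


namespace S17
open scoped Classical

variable {n : ℕ}

/-- probability of an assignment (copy of pr) -/
noncomputable def prr (p : Fin n → ℝ) (a : Fin n → Bool) : ℝ :=
  ∏ i, if a i then p i else 1 - p i

/-- single-coordinate factor -/
noncomputable def fact (p : Fin n → ℝ) (b : Fin n → Bool) (j : Fin n) : ℝ :=
  if b j then p j else 1 - p j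

lemma prr_eq (p : Fin n → ℝ) (a : Fin n → Bool) : prr p a = ∏ j, fact p a j := rfl

/-- subcube of assignments agreeing with `b` outside `s` -/
def Sub (s : Finset (Fin n)) (b : Fin n → Bool) : Finset (Fin n → Bool) :=
  univ.filter (fun a => ∀ j, j ∉ s → a j = b j)

lemma mem_Sub {s : Finset (Fin n)} {b a : Fin n → Bool} :
    a ∈ Sub s b ↔ ∀ j, j ∉ s → a j = b j := by
  rw [Sub, Finset.mem_filter]
  simp only [Finset.mem_univ, true_and]

lemma self_mem_Sub {s : Finset (Fin n)} {b : Fin n → Bool} : b ∈ Sub s b :=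
  mem_Sub.2 (fun _ _ => rfl)

lemma Sub_empty (b : Fin n → Bool) : Sub (∅ : Finset (Fin n)) b = {b} := by
  ext a
  rw [mem_Sub, Finset.mem_singleton]
  constructor
  · intro h; funext j; exact h j (by simp)
  · intro h j _; rw [h]

lemma Sub_erase {s : Finset (Fin n)} {b : Fin n → Bool} {i : Fin n} (hi : i ∈ s) (x : Bool) :
    Sub (s.erase i) (Function.update b i x) = (Sub s b).filter (fun a => a i = x) := by
  ext a
  rw [mem_Sub, Finset.mem_filter, mem_Sub]
  constructor
  · intro h
    have hai : a i = x := by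
      have := h i (by simp)
      rwa [Function.update_self] at this
    refine ⟨?_, hai⟩
    intro j hj
    have hji : j ≠ i := by rintro rfl; exact hj hi
    have := h j (by simp [hj, hji])
    rwa [Function.update_of_ne hji] at this
  · rintro ⟨h1, h2⟩ j hj
    rcases eq_or_ne j i with rfl | hne
    · rwa [Function.update_self]
    · rw [Function.update_of_ne hne]
      rw [Finset.mem_erase, not_and] at hj
      exact h1 j (hj hne)

lemma Sub_erase_subset {s : Finset (Fin n)} {b : Fin n → Bool} {i : Fin n} (hi : i ∈ s) (x : Bool) :
    Sub (s.erase i) (Function.update b i x) ⊆ Sub s b := by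
  rw [Sub_erase hi]; exact filter_subset _ _

/-- splitting a sum over a subcube at coordinate `i ∈ s` -/
lemma sum_Sub_split {s : Finset (Fin n)} {b : Fin n → Bool} {i : Fin n} (hi : i ∈ s)
    (F : (Fin n → Bool) → ℝ) :
    ∑ a ∈ Sub s b, F a =
      (∑ a ∈ Sub (s.erase i) (Function.update b i false), F a) +
      (∑ a ∈ Sub (s.erase i) (Function.update b i true), F a) := by
  rw [Sub_erase hi, Sub_erase hi]
  rw [← Finset.sum_filter_add_sum_filter_not (Sub s b) (fun a => a i = false)]
  congr 1
  apply Finset.sum_congr _ (fun _ _ => rfl)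
  apply Finset.filter_congr
  intro a _
  simp

lemma prr_nonneg {p : Fin n → ℝ} (hp : ∀ i, 0 < p i ∧ p i < 1) (a : Fin n → Bool) :
    0 ≤ prr p a := by
  apply Finset.prod_nonneg
  intro i _
  rcases hp i with ⟨h1, h2⟩
  by_cases h : a i <;> simp [h] <;> linarith

lemma fact_nonneg {p : Fin n → ℝ} (hp : ∀ i, 0 < p i ∧ p i < 1) (b : Fin n → Bool) (j : Fin n) :
    0 ≤ fact p b j := by
  rcases hp j with ⟨h1, h2⟩
  by_cases h : b j <;> simp [fact, h] <;> linarith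

/-- marginalization: total mass of a subcube -/
lemma sum_prr_Sub {p : Fin n → ℝ} : ∀ (s : Finset (Fin n)) (b : Fin n → Bool),
    ∑ a ∈ Sub s b, prr p a = ∏ j ∈ sᶜ, fact p b j := by
  intro s
  induction s using Finset.induction_on with
  | empty =>
    intro b
    rw [Sub_empty]
    simp [prr_eq, compl_empty]
  | @insert i s his ih =>
    intro b
    have hi : i ∈ insert i s := mem_insert_self i s
    have herase : (insert i s).erase i = s := Finset.erase_insert his
    rw [sum_Sub_split hi, herase, ih, ih]
    have hcompl : sᶜ = insert i (insert i s)ᶜ := by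
      rw [Finset.compl_insert]
      rw [Finset.insert_erase]
      simp [his]
    rw [hcompl, Finset.prod_insert (by simp), Finset.prod_insert (by simp)]
    have h1 : ∀ x : Bool, ∀ j ∈ (insert i s)ᶜ, fact p (Function.update b i x) j = fact p b j := by
      intro x j hj
      have : j ≠ i := by
        intro h; subst h; simp at hj
      simp [fact, Function.update_of_ne this]
    rw [Finset.prod_congr rfl (h1 false), Finset.prod_congr rfl (h1 true)]
    have : fact p (Function.update b i false) i + fact p (Function.update b i true) i = 1 := by
      simp [fact]
    rw [← add_mul, this, one_mul]


-- ### counting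
/-- number of coordinates where `a` takes value `v` -/
def cnt (v : Bool) (a : Fin n → Bool) : ℕ := (univ.filter (fun j => a j = v)).card

/-- number of fixed coordinates (outside `s`) where `b` takes value `v` -/
def ov (v : Bool) (s : Finset (Fin n)) (b : Fin n → Bool) : ℕ :=
  (sᶜ.filter (fun j => b j = v)).card

lemma cnt_eq {v : Bool} {s : Finset (Fin n)} {b a : Fin n → Bool} (ha : a ∈ Sub s b) :
    cnt v a = ov v s b + (s.filter (fun j => a j = v)).card := by
  rw [cnt, ov]
  have h1 : (univ.filter (fun j => a j = v)) =
      (sᶜ.filter (fun j => a j = v)) ∪ (s.filter (fun j => a j = v)) := by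
    rw [← Finset.filter_union]
    congr 1
    ext j
    by_cases h : j ∈ s <;> simp [h]
  have h2 : (sᶜ.filter (fun j => a j = v)) = (sᶜ.filter (fun j => b j = v)) := by
    apply Finset.filter_congr
    intro j hj
    rw [mem_Sub.1 ha j (by simpa using hj)]
  rw [h1, h2, Finset.card_union_of_disjoint]
  exact Finset.disjoint_filter_filter (by simp [Finset.disjoint_left])

lemma cnt_bounds {v : Bool} {s : Finset (Fin n)} {b a : Fin n → Bool} (ha : a ∈ Sub s b) :
    ov v s b ≤ cnt v a ∧ cnt v a ≤ ov v s b + s.card := by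
  rw [cnt_eq ha]
  constructor
  · omega
  · have := Finset.card_filter_le s (fun j => a j = v)
    omega

/-- the assignment agreeing with b off s, constant x on s -/
def fill (s : Finset (Fin n)) (b : Fin n → Bool) (x : Bool) : Fin n → Bool :=
  fun j => if j ∈ s then x else b j

lemma fill_mem_Sub {s : Finset (Fin n)} {b : Fin n → Bool} {x : Bool} :
    fill s b x ∈ Sub s b := by
  rw [mem_Sub]
  intro j hj
  simp [fill, hj]

lemma cnt_fill_same {v : Bool} {s : Finset (Fin n)} {b : Fin n → Bool} :
    cnt v (fill s b v) = ov v s b + s.card := by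
  rw [cnt_eq (fill_mem_Sub)]
  congr 1
  rw [Finset.filter_true_of_mem]
  intro j hj
  simp [fill, hj]

lemma cnt_fill_other {v : Bool} {s : Finset (Fin n)} {b : Fin n → Bool} :
    cnt v (fill s b (!v)) = ov v s b := by
  rw [cnt_eq (fill_mem_Sub)]
  have : (s.filter (fun j => fill s b (!v) j = v)) = ∅ := by
    apply Finset.filter_false_of_mem
    intro j hj
    simp [fill, hj]
  rw [this]
  simp

/-- contiguity: every count in [ov, ov + |s|] is attained on the subcube -/
lemma exists_cnt_eq {v : Bool} {s : Finset (Fin n)} {b : Fin n → Bool} {k : ℕ}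
    (hk : k ≤ s.card) : ∃ a ∈ Sub s b, cnt v a = ov v s b + k := by
  obtain ⟨t, hts, htc⟩ := Finset.exists_subset_card_eq hk
  refine ⟨fun j => if j ∈ t then v else if j ∈ s then !v else b j, ?_, ?_⟩
  · rw [mem_Sub]
    intro j hj
    have hjt : j ∉ t := fun h => hj (hts h)
    simp [hjt, hj]
  · rw [cnt_eq (s := s) (b := b)]
    · congr 1
      rw [← htc]
      congr 1
      ext j
      simp only [Finset.mem_filter]
      constructor
      · rintro ⟨hjs, hcond⟩
        by_cases hjt : j ∈ t
        · exact hjt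
        · simp [hjt, hjs] at hcond
      · intro hjt
        exact ⟨hts hjt, by simp [hjt]⟩
    · rw [mem_Sub]
      intro j hj
      have hjt : j ∉ t := fun h => hj (hts h)
      simp [hjt, hj]

-- ### ov updates
lemma ov_update {v : Bool} {s : Finset (Fin n)} {b : Fin n → Bool} {i : Fin n} (hi : i ∈ s)
    (x : Bool) :
    ov v (s.erase i) (Function.update b i x) = ov v s b + (if x = v then 1 else 0) := by
  rw [ov, ov]
  have h1 : (s.erase i)ᶜ = insert i sᶜ := by
    rw [Finset.compl_erase]
  rw [h1, Finset.filter_insert]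
  have h2 : sᶜ.filter (fun j => Function.update b i x j = v) =
      sᶜ.filter (fun j => b j = v) := by
    apply Finset.filter_congr
    intro j hj
    have : j ≠ i := by rintro rfl; simp [hi] at hj
    rw [Function.update_of_ne this]
  rw [h2]
  by_cases hx : x = v
  · rw [if_pos (by rw [Function.update_self]; exact hx)]
    rw [Finset.card_insert_of_notMem (by simp [hi])]
    simp [hx]
  · rw [if_neg (by rw [Function.update_self]; exact hx)]
    simp [hx]


-- ### the DP value function
/-- `h` is constant on the subcube -/
def Cst (h : (Fin n → Bool) → ℕ) (s : Finset (Fin n)) (b : Fin n → Bool) : Prop :=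
  ∀ a ∈ Sub s b, ∀ a' ∈ Sub s b, h a = h a'

/-- mass of the target within the subcube -/
noncomputable def Pt (p : Fin n → ℝ) (h : (Fin n → Bool) → ℕ) (ℓ : ℕ)
    (s : Finset (Fin n)) (b : Fin n → Bool) : ℝ :=
  ∑ a ∈ Sub s b, if h a = ℓ then prr p a else 0

/-- optimal expected verification cost on the subcube -/
noncomputable def W (p c : Fin n → ℝ) (h : (Fin n → Bool) → ℕ) (ℓ : ℕ)
    (s : Finset (Fin n)) (b : Fin n → Bool) : ℝ :=
  if Cst h s b then 0
  else if hs : s.Nonempty then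
    (s.attach.inf' (by rwa [Finset.attach_nonempty_iff]) fun i =>
      c i.1 * Pt p h ℓ s b + W p c h ℓ (s.erase i.1) (Function.update b i.1 false)
        + W p c h ℓ (s.erase i.1) (Function.update b i.1 true))
  else 0
termination_by s.card
decreasing_by
  all_goals exact Finset.card_erase_lt_of_mem i.2

lemma Cst_of_empty (h : (Fin n → Bool) → ℕ) (b : Fin n → Bool) :
    Cst h (∅ : Finset (Fin n)) b := by
  intro a ha a' ha'
  rw [Sub_empty, Finset.mem_singleton] at ha ha'
  rw [ha, ha']

lemma nonempty_of_not_Cst {h : (Fin n → Bool) → ℕ} {s : Finset (Fin n)} {b : Fin n → Bool}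
    (hc : ¬ Cst h s b) : s.Nonempty := by
  rcases Finset.eq_empty_or_nonempty s with rfl | hs
  · exact absurd (Cst_of_empty h b) hc
  · exact hs

lemma W_const {p c : Fin n → ℝ} {h : (Fin n → Bool) → ℕ} {ℓ : ℕ} {s : Finset (Fin n)}
    {b : Fin n → Bool} (hc : Cst h s b) : W p c h ℓ s b = 0 := by
  rw [W, if_pos hc]

lemma W_le {p c : Fin n → ℝ} {h : (Fin n → Bool) → ℕ} {ℓ : ℕ} {s : Finset (Fin n)}
    {b : Fin n → Bool} (hc : ¬ Cst h s b) {i : Fin n} (hi : i ∈ s) :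
    W p c h ℓ s b ≤ c i * Pt p h ℓ s b + W p c h ℓ (s.erase i) (Function.update b i false)
        + W p c h ℓ (s.erase i) (Function.update b i true) := by
  rw [W, if_neg hc, dif_pos (nonempty_of_not_Cst hc)]
  exact Finset.inf'_le _ (Finset.mem_attach _ ⟨i, hi⟩)

lemma W_spec {p c : Fin n → ℝ} {h : (Fin n → Bool) → ℕ} {ℓ : ℕ} {s : Finset (Fin n)}
    {b : Fin n → Bool} (hc : ¬ Cst h s b) :
    ∃ i ∈ s, W p c h ℓ s b = c i * Pt p h ℓ s b
        + W p c h ℓ (s.erase i) (Function.update b i false)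
        + W p c h ℓ (s.erase i) (Function.update b i true) := by
  rw [W, if_neg hc, dif_pos (nonempty_of_not_Cst hc)]
  obtain ⟨i, -, hieq⟩ := Finset.exists_mem_eq_inf'
    (s := s.attach) (by rw [Finset.attach_nonempty_iff]; exact nonempty_of_not_Cst hc)
    (fun i => c i.1 * Pt p h ℓ s b + W p c h ℓ (s.erase i.1) (Function.update b i.1 false)
        + W p c h ℓ (s.erase i.1) (Function.update b i.1 true))
  exact ⟨i.1, i.2, hieq⟩

/-- if `h ≠ ℓ` throughout the subcube, the target mass is zero -/
lemma Pt_zero {p : Fin n → ℝ} {h : (Fin n → Bool) → ℕ} {ℓ : ℕ} {s : Finset (Fin n)}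
    {b : Fin n → Bool} (h0 : ∀ a ∈ Sub s b, h a ≠ ℓ) : Pt p h ℓ s b = 0 := by
  rw [Pt]
  apply Finset.sum_eq_zero
  intro a ha
  rw [if_neg (h0 a ha)]

lemma Cst_of_forall {h : (Fin n → Bool) → ℕ} {s : Finset (Fin n)} {b : Fin n → Bool}
    {vv : ℕ} (hv : ∀ a ∈ Sub s b, h a = vv) : Cst h s b := by
  intro a ha a' ha'
  rw [hv a ha, hv a' ha']

lemma Pt_nonneg {p : Fin n → ℝ} (hp : ∀ i, 0 < p i ∧ p i < 1) {h : (Fin n → Bool) → ℕ}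
    {ℓ : ℕ} {s : Finset (Fin n)} {b : Fin n → Bool} : 0 ≤ Pt p h ℓ s b := by
  apply Finset.sum_nonneg
  intro a _
  split
  · apply Finset.prod_nonneg
    intro i _
    rcases hp i with ⟨h1, h2⟩
    by_cases hb : a i <;> simp [hb] <;> linarith
  · exact le_refl 0

lemma Pt_split {p : Fin n → ℝ} {h : (Fin n → Bool) → ℕ} {ℓ : ℕ} {s : Finset (Fin n)}
    {b : Fin n → Bool} {i : Fin n} (hi : i ∈ s) :
    Pt p h ℓ s b = Pt p h ℓ (s.erase i) (Function.update b i false)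
      + Pt p h ℓ (s.erase i) (Function.update b i true) := by
  exact sum_Sub_split hi _


-- ### begin new material

lemma mem_Sub_update {s : Finset (Fin n)} {b a : Fin n → Bool} {i : Fin n} {x : Bool}
    (ha : a ∈ Sub (s.erase i) (Function.update b i x)) : a i = x := by
  have := mem_Sub.1 ha i (by simp)
  rwa [Function.update_self] at this

lemma cost_nonneg {c : Fin n → ℝ} (hc : ∀ i, 0 < c i) (T : DTree n) (a : Fin n → Bool) :
    0 ≤ T.cost c a := by
  induction T with
  | leaf v => simp [DTree.cost]
  | node i t0 t1 ih0 ih1 =>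
    rw [DTree.cost]
    have : (0:ℝ) ≤ if a i then t1.cost c a else t0.cost c a := by
      split <;> assumption
    have hci := hc i
    linarith

/-- lower transfer: any tree evaluating `h` on the subcube pays at least `W` -/
lemma W_le_tree {p c : Fin n → ℝ} (hp : ∀ i, 0 < p i ∧ p i < 1) (hc : ∀ i, 0 < c i)
    {h : (Fin n → Bool) → ℕ} {ℓ : ℕ} (T : DTree n) :
    ∀ (s : Finset (Fin n)) (b : Fin n → Bool), (∀ a ∈ Sub s b, T.eval a = h a) →
    W p c h ℓ s b ≤ ∑ a ∈ Sub s b, (if h a = ℓ then T.cost c a * prr p a else 0) := by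
  induction T with
  | leaf v =>
    intro s b hev
    have hcst : Cst h s b := by
      intro a ha a' ha'
      rw [← hev a ha, ← hev a' ha']
      simp [DTree.eval]
    rw [W_const hcst]
    apply Finset.sum_nonneg
    intro a _
    split
    · simp [DTree.cost]
    · exact le_refl 0
  | node i t0 t1 ih0 ih1 =>
    intro s b hev
    by_cases hcst : Cst h s b
    · rw [W_const hcst]
      apply Finset.sum_nonneg
      intro a ha
      split
      · exact mul_nonneg (cost_nonneg hc _ a) (prr_nonneg hp a)
      · exact le_refl 0
    · by_cases hi : i ∈ s
      · -- query i is a free coordinate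
        rw [sum_Sub_split hi]
        have hbr : ∀ (x : Bool), ∑ a ∈ Sub (s.erase i) (Function.update b i x),
            (if h a = ℓ then (DTree.node i t0 t1).cost c a * prr p a else 0)
            = c i * Pt p h ℓ (s.erase i) (Function.update b i x)
              + ∑ a ∈ Sub (s.erase i) (Function.update b i x),
                (if h a = ℓ then (if x then t1 else t0).cost c a * prr p a else 0) := by
          intro x
          rw [Pt, Finset.mul_sum, ← Finset.sum_add_distrib]
          apply Finset.sum_congr rfl
          intro a ha
          have hai : a i = x := mem_Sub_update ha
          by_cases ht : h a = ℓ
          · simp only [ht, if_pos]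
            rw [DTree.cost, hai]
            cases x <;> simp <;> ring
          · simp [ht]
        have hW0 : W p c h ℓ (s.erase i) (Function.update b i false) ≤
            ∑ a ∈ Sub (s.erase i) (Function.update b i false),
              (if h a = ℓ then t0.cost c a * prr p a else 0) := by
          apply ih0
          intro a ha
          have hai : a i = false := mem_Sub_update ha
          rw [← hev a (Sub_erase_subset hi false ha)]
          simp [DTree.eval, hai]
        have hW1 : W p c h ℓ (s.erase i) (Function.update b i true) ≤
            ∑ a ∈ Sub (s.erase i) (Function.update b i true),
              (if h a = ℓ then t1.cost c a * prr p a else 0) := by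
          apply ih1
          intro a ha
          have hai : a i = true := mem_Sub_update ha
          rw [← hev a (Sub_erase_subset hi true ha)]
          simp [DTree.eval, hai]
        have hle := W_le (p := p) (c := c) (ℓ := ℓ) hcst hi
        have hPt := Pt_split (p := p) (h := h) (ℓ := ℓ) (b := b) hi
        have e0 := hbr false
        have e1 := hbr true
        norm_num at e0 e1
        rw [e0, e1]
        have hmul : c i * Pt p h ℓ s b =
            c i * Pt p h ℓ (s.erase i) (Function.update b i false)
            + c i * Pt p h ℓ (s.erase i) (Function.update b i true) := by
          rw [hPt]; ring
        linarith
      · -- i already fixed: a i = b i on the subcube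
        have hsum : ∀ a ∈ Sub s b,
            (if h a = ℓ then (DTree.node i t0 t1).cost c a * prr p a else 0) =
            (if h a = ℓ then c i * prr p a else 0) +
            (if h a = ℓ then (if b i then t1 else t0).cost c a * prr p a else 0) := by
          intro a ha
          have hai : a i = b i := mem_Sub.1 ha i hi
          by_cases ht : h a = ℓ
          · rw [if_pos ht, if_pos ht, if_pos ht, DTree.cost, hai]
            by_cases hbi : b i <;> simp [hbi] <;> ring
          · simp [ht]
        rw [Finset.sum_congr rfl hsum, Finset.sum_add_distrib]
        have h1 : ∑ a ∈ Sub s b, (if h a = ℓ then c i * prr p a else 0) = c i * Pt p h ℓ s b := by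
          rw [Pt, Finset.mul_sum]
          apply Finset.sum_congr rfl
          intro a _
          split <;> simp
        have h2 : W p c h ℓ s b ≤ ∑ a ∈ Sub s b,
            (if h a = ℓ then (if b i then t1 else t0).cost c a * prr p a else 0) := by
          by_cases hbi : b i
          · simp only [hbi, if_true]
            apply ih1
            intro a ha
            have hai : a i = b i := mem_Sub.1 ha i hi
            rw [← hev a ha]
            simp [DTree.eval, hai, hbi]
          · simp only [hbi, if_false]
            apply ih0
            intro a ha
            have hai : a i = b i := mem_Sub.1 ha i hi
            rw [← hev a ha]
            simp [DTree.eval, hai, hbi]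
        have h3 : 0 ≤ c i * Pt p h ℓ s b :=
          mul_nonneg (le_of_lt (hc i)) (Pt_nonneg hp)
        rw [h1]
        linarith

/-- merge: `a` on `s`, `b` off `s` -/
def merge (s : Finset (Fin n)) (a b : Fin n → Bool) : Fin n → Bool :=
  fun j => if j ∈ s then a j else b j

lemma merge_mem_Sub {s : Finset (Fin n)} {a b : Fin n → Bool} : merge s a b ∈ Sub s b := by
  rw [mem_Sub]; intro j hj; simp [merge, hj]

lemma merge_erase {s : Finset (Fin n)} {a b : Fin n → Bool} {i : Fin n} (hi : i ∈ s)
    {x : Bool} (hax : a i = x) :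
    merge (s.erase i) a (Function.update b i x) = merge s a b := by
  funext j
  rcases eq_or_ne j i with rfl | hne
  · simp [merge, hi, Function.update_self, hax]
  · simp only [merge, Finset.mem_erase]
    simp [Function.update_of_ne hne, hne]

/-- upper transfer: a tree attaining `W` -/
lemma tree_of_W {p c : Fin n → ℝ} {h : (Fin n → Bool) → ℕ} {ℓ : ℕ} :
    ∀ (N : ℕ) (s : Finset (Fin n)) (b : Fin n → Bool), s.card = N →
    ∃ T : DTree n, T.Proper sᶜ ∧ (∀ a, T.eval a = h (merge s a b)) ∧
      (∑ a ∈ Sub s b, if h a = ℓ then T.cost c a * prr p a else 0) = W p c h ℓ s b := by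
  intro N
  induction N using Nat.strong_induction_on with
  | _ N ih =>
    intro s b hcard
    by_cases hcst : Cst h s b
    · refine ⟨DTree.leaf (h (merge s b b)), trivial, ?_, ?_⟩
      · intro a
        show h (merge s b b) = h (merge s a b)
        exact hcst _ merge_mem_Sub _ merge_mem_Sub
      · rw [W_const hcst]
        apply Finset.sum_eq_zero
        intro a _
        split <;> simp [DTree.cost]
    · obtain ⟨i, hi, heq⟩ := W_spec (p := p) (c := c) (ℓ := ℓ) hcst
      have hlt : (s.erase i).card < N := by
        rw [← hcard]; exact Finset.card_erase_lt_of_mem hi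
      obtain ⟨T0, hP0, hev0, hc0⟩ := ih _ hlt (s.erase i) (Function.update b i false) rfl
      obtain ⟨T1, hP1, hev1, hc1⟩ := ih _ hlt (s.erase i) (Function.update b i true) rfl
      refine ⟨DTree.node i T0 T1, ?_, ?_, ?_⟩
      · refine ⟨by simp [hi], ?_, ?_⟩
        · rwa [← Finset.compl_erase]
        · rwa [← Finset.compl_erase]
      · intro a
        show (if a i then T1.eval a else T0.eval a) = h (merge s a b)
        by_cases hai : a i
        · rw [if_pos hai, hev1 a, merge_erase hi (by simp [hai])]
        · rw [if_neg hai, hev0 a, merge_erase hi (by simp [Bool.of_not_eq_true hai])]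
      · rw [heq, sum_Sub_split hi, Pt_split hi]
        have ecase : ∀ (x : Bool),
            ((∑ a ∈ Sub (s.erase i) (Function.update b i x),
              if h a = ℓ then (if x then T1 else T0).cost c a * prr p a else 0)
              = W p c h ℓ (s.erase i) (Function.update b i x)) →
            (∑ a ∈ Sub (s.erase i) (Function.update b i x),
              if h a = ℓ then (DTree.node i T0 T1).cost c a * prr p a else 0) =
            c i * Pt p h ℓ (s.erase i) (Function.update b i x)
              + W p c h ℓ (s.erase i) (Function.update b i x) := by
          intro x ht
          rw [← ht, Pt, Finset.mul_sum, ← Finset.sum_add_distrib]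
          apply Finset.sum_congr rfl
          intro a ha
          have hai : a i = x := mem_Sub_update ha
          by_cases hh : h a = ℓ
          · simp only [hh, if_pos]
            rw [DTree.cost, hai]
            cases x <;> simp <;> ring
          · simp [hh]
        rw [ecase false (by simpa using hc0), ecase true (by simpa using hc1)]
        ring

lemma Sub_univ (b : Fin n → Bool) : Sub (univ : Finset (Fin n)) b = univ := by
  ext a
  simp [mem_Sub]

lemma merge_univ (a b : Fin n → Bool) : merge (univ : Finset (Fin n)) a b = a := by
  funext j; simp [merge]

lemma prr_eq_pr (p : Fin n → ℝ) (a : Fin n → Bool) : prr p a = pr p a := rfl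

/-- the fundamental identity: minLCost is the DP value -/
lemma minLCost_eq_W {p c : Fin n → ℝ} (hp : ∀ i, 0 < p i ∧ p i < 1) (hc : ∀ i, 0 < c i)
    (h : (Fin n → Bool) → ℕ) (ℓ : ℕ) (b : Fin n → Bool) :
    minLCost p c h ℓ = W p c h ℓ univ b := by
  have hconv : ∀ T : DTree n,
      (∑ a ∈ Finset.univ.filter (fun a => h a = ℓ), T.cost c a * pr p a)
      = ∑ a ∈ Sub univ b, if h a = ℓ then T.cost c a * prr p a else 0 := by
    intro T
    rw [Sub_univ, Finset.sum_filter]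
    rfl
  have hmem : W p c h ℓ univ b ∈ {x : ℝ | ∃ T : DTree n, T.Proper ∅ ∧ (∀ a, T.eval a = h a) ∧
      x = ∑ a ∈ Finset.univ.filter (fun a => h a = ℓ), T.cost c a * pr p a} := by
    obtain ⟨T, hP, hev, hco⟩ := tree_of_W (p := p) (c := c) (h := h) (ℓ := ℓ)
      (univ.card) univ b rfl
    refine ⟨T, ?_, ?_, ?_⟩
    · rwa [Finset.compl_univ] at hP
    · intro a; rw [hev a, merge_univ]
    · rw [hconv T, hco]
  have hbound : ∀ x ∈ {x : ℝ | ∃ T : DTree n, T.Proper ∅ ∧ (∀ a, T.eval a = h a) ∧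
      x = ∑ a ∈ Finset.univ.filter (fun a => h a = ℓ), T.cost c a * pr p a},
      W p c h ℓ univ b ≤ x := by
    rintro x ⟨T, -, hev, rfl⟩
    rw [hconv T]
    exact W_le_tree hp hc T univ b (fun a _ => hev a)
  rw [minLCost]
  exact le_antisymm (csInf_le ⟨_, hbound⟩ hmem) (le_csInf ⟨_, hmem⟩ hbound)


/-- strict total order induced by a real-valued key, ties broken by index -/
def keyLT (r : Fin n → ℝ) (i j : Fin n) : Prop :=
  r i < r j ∨ (r i = r j ∧ i < j)

lemma keyLT_irrefl (r : Fin n → ℝ) (i : Fin n) : ¬ keyLT r i i := by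
  rintro (h | ⟨-, h⟩) <;> exact lt_irrefl _ h

lemma keyLT_asymm {r : Fin n → ℝ} {i j : Fin n} (h1 : keyLT r i j) (h2 : keyLT r j i) : False := by
  rcases h1 with h1 | ⟨e1, l1⟩ <;> rcases h2 with h2 | ⟨e2, l2⟩
  · exact lt_irrefl _ (h1.trans h2)
  · rw [e2] at h1; exact lt_irrefl _ h1
  · rw [e1] at h2; exact lt_irrefl _ h2
  · exact lt_irrefl _ (l1.trans l2)

lemma keyLT_trans {r : Fin n → ℝ} {i j k : Fin n} (h1 : keyLT r i j) (h2 : keyLT r j k) :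
    keyLT r i k := by
  rcases h1 with h1 | ⟨e1, l1⟩ <;> rcases h2 with h2 | ⟨e2, l2⟩
  · exact Or.inl (h1.trans h2)
  · exact Or.inl (e2 ▸ h1)
  · exact Or.inl (e1 ▸ h2)
  · exact Or.inr ⟨e1.trans e2, l1.trans l2⟩

lemma keyLT_trichotomy (r : Fin n → ℝ) {i j : Fin n} (hne : i ≠ j) :
    keyLT r i j ∨ keyLT r j i := by
  rcases lt_trichotomy (r i) (r j) with h | h | h
  · exact Or.inl (Or.inl h)
  · rcases lt_or_gt_of_ne (show i ≠ j from hne) with hij | hij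
    · exact Or.inl (Or.inr ⟨h, hij⟩)
    · exact Or.inr (Or.inr ⟨h.symm, hij⟩)
  · exact Or.inr (Or.inl h)

/-- rank of an index within a set w.r.t. the key order -/
noncomputable def rank (r : Fin n → ℝ) (s : Finset (Fin n)) (i : Fin n) : ℕ :=
  (s.filter (fun j => keyLT r j i)).card

/-- minimum-property -/
def IsMin (r : Fin n → ℝ) (s : Finset (Fin n)) (i : Fin n) : Prop :=
  i ∈ s ∧ ∀ j ∈ s, j ≠ i → keyLT r i j

lemma exists_isMin (r : Fin n → ℝ) {s : Finset (Fin n)} (hs : s.Nonempty) :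
    ∃ i, IsMin r s i := by
  obtain ⟨m0, hm0, hmin⟩ := Finset.exists_min_image s r hs
  have htne : (s.filter (fun j => r j = r m0)).Nonempty := ⟨m0, by simp [hm0]⟩
  set m := (s.filter (fun j => r j = r m0)).min' htne with hm
  have hmmem := Finset.min'_mem _ htne
  rw [Finset.mem_filter] at hmmem
  refine ⟨m, hmmem.1, ?_⟩
  intro j hj hne
  have hle : r m ≤ r j := by rw [hmmem.2]; exact hmin j hj
  rcases eq_or_lt_of_le hle with he | hl
  · right
    refine ⟨he, ?_⟩
    have hjf : j ∈ s.filter (fun j => r j = r m0) := by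
      rw [Finset.mem_filter]
      refine ⟨hj, ?_⟩
      rw [← he]; exact hmmem.2
    exact lt_of_le_of_ne (Finset.min'_le _ j hjf) (Ne.symm hne)
  · left; exact hl

lemma isMin_rank_zero {r : Fin n → ℝ} {s : Finset (Fin n)} {i : Fin n} (h : IsMin r s i) :
    rank r s i = 0 := by
  rw [rank, Finset.card_eq_zero]
  apply Finset.filter_false_of_mem
  intro j hj hlt
  rcases eq_or_ne j i with rfl | hne
  · exact keyLT_irrefl r j hlt
  · exact keyLT_asymm hlt (h.2 j hj hne)

lemma rank_zero_isMin {r : Fin n → ℝ} {s : Finset (Fin n)} {i : Fin n} (hi : i ∈ s)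
    (h : rank r s i = 0) : IsMin r s i := by
  refine ⟨hi, ?_⟩
  intro j hj hne
  rcases keyLT_trichotomy r (show i ≠ j from fun hh => hne hh.symm) with hlt | hlt
  · exact hlt
  · exfalso
    rw [rank, Finset.card_eq_zero] at h
    have : j ∈ s.filter (fun j => keyLT r j i) := by
      rw [Finset.mem_filter]; exact ⟨hj, hlt⟩
    rw [h] at this
    exact absurd this (Finset.notMem_empty j)

lemma isMin_unique {r : Fin n → ℝ} {s : Finset (Fin n)} {i j : Fin n}
    (hi : IsMin r s i) (hj : IsMin r s j) : i = j := by
  by_contra hne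
  exact keyLT_asymm (hi.2 j hj.1 (Ne.symm hne)) (hj.2 i hi.1 hne)

lemma isMin_erase {r : Fin n → ℝ} {s : Finset (Fin n)} {i k : Fin n} (h : IsMin r s i)
    (hk : i ≠ k) : IsMin r (s.erase k) i := by
  refine ⟨Finset.mem_erase.2 ⟨hk, h.1⟩, ?_⟩
  intro j hj hne
  exact h.2 j (Finset.mem_of_mem_erase hj) hne

lemma rank_erase_min {r : Fin n → ℝ} {s : Finset (Fin n)} {istar j : Fin n}
    (h : IsMin r s istar) (hj : j ∈ s) (hne : j ≠ istar) :
    rank r s j = rank r (s.erase istar) j + 1 := by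
  rw [rank, rank]
  have h1 : s.filter (fun k => keyLT r k j) =
      insert istar ((s.erase istar).filter (fun k => keyLT r k j)) := by
    ext k
    simp only [Finset.mem_filter, Finset.mem_insert, Finset.mem_erase]
    constructor
    · rintro ⟨hks, hklt⟩
      rcases eq_or_ne k istar with rfl | hkne
      · exact Or.inl rfl
      · exact Or.inr ⟨⟨hkne, hks⟩, hklt⟩
    · rintro (rfl | ⟨⟨-, hks⟩, hklt⟩)
      · exact ⟨h.1, h.2 j hj hne⟩
      · exact ⟨hks, hklt⟩
  rw [h1, Finset.card_insert_of_notMem (by simp)]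

lemma rank_lt_card {r : Fin n → ℝ} {s : Finset (Fin n)} {i : Fin n} (hi : i ∈ s) :
    rank r s i < s.card := by
  rw [rank]
  apply Finset.card_lt_card
  rw [Finset.ssubset_iff_of_subset (Finset.filter_subset _ _)]
  exact ⟨i, hi, by simp [keyLT_irrefl]⟩

lemma rank_strictMono {r : Fin n → ℝ} {s : Finset (Fin n)} {i j : Fin n} (hi : i ∈ s)
    (hlt : keyLT r i j) : rank r s i < rank r s j := by
  rw [rank, rank]
  apply Finset.card_lt_card
  rw [Finset.ssubset_iff_of_subset]
  · exact ⟨i, by simp [hi, hlt], by simp [keyLT_irrefl]⟩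
  · intro k hk
    rw [Finset.mem_filter] at hk ⊢
    exact ⟨hk.1, keyLT_trans hk.2 hlt⟩

lemma rank_injOn {r : Fin n → ℝ} {s : Finset (Fin n)} {i j : Fin n} (hi : i ∈ s) (hj : j ∈ s)
    (hne : i ≠ j) : rank r s i ≠ rank r s j := by
  rcases keyLT_trichotomy r hne with h | h
  · exact Nat.ne_of_lt (rank_strictMono hi h)
  · exact Nat.ne_of_gt (rank_strictMono hj h)

/-- at least `t` elements have rank `< t`, provided `t ≤ |s|` -/
lemma card_rank_lt {r : Fin n → ℝ} {s : Finset (Fin n)} {t : ℕ} (ht : t ≤ s.card) :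
    t ≤ (s.filter (fun i => rank r s i < t)).card := by
  have hcompl : (s.filter (fun i => ¬ rank r s i < t)).card ≤ s.card - t := by
    have : (s.filter (fun i => ¬ rank r s i < t)).card ≤ (Finset.Ico t s.card).card := by
      apply Finset.card_le_card_of_injOn (fun i => rank r s i)
      · intro i hif
        rw [Finset.mem_coe, Finset.mem_filter] at hif
        rw [Finset.mem_coe, Finset.mem_Ico]
        exact ⟨Nat.le_of_not_lt hif.2, rank_lt_card hif.1⟩
      · intro i hif j hjf hij
        by_contra hne
        rw [Finset.coe_filter] at hif hjf
        simp only [Set.mem_setOf_eq] at hif hjf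
        exact rank_injOn hif.1 hjf.1 hne hij
    rwa [Nat.card_Ico] at this
  have hsplit := Finset.card_filter_add_card_filter_not
    (s := s) (p := fun i => rank r s i < t)
  omega

/-- the pigeonhole step: two rank conditions overlap -/
lemma exists_common {r1 r2 : Fin n → ℝ} {s : Finset (Fin n)} {Z1 Z2 : ℕ}
    (h1 : Z1 ≤ s.card) (h2 : Z2 ≤ s.card) (hsum : s.card < Z1 + Z2) :
    ∃ i ∈ s, rank r1 s i < Z1 ∧ rank r2 s i < Z2 := by
  set X := s.filter (fun i => rank r1 s i < Z1)
  set Y := s.filter (fun i => rank r2 s i < Z2)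
  have hX : Z1 ≤ X.card := card_rank_lt h1
  have hY : Z2 ≤ Y.card := card_rank_lt h2
  have hunion : (X ∪ Y).card ≤ s.card :=
    Finset.card_le_card (Finset.union_subset (Finset.filter_subset _ _) (Finset.filter_subset _ _))
  have hie := Finset.card_inter_add_card_union X Y
  have hne : (X ∩ Y).Nonempty := by
    rw [← Finset.card_pos]
    omega
  obtain ⟨i, hi⟩ := hne
  rw [Finset.mem_inter, Finset.mem_filter, Finset.mem_filter] at hi
  exact ⟨i, hi.1.1, hi.1.2, hi.2.2⟩


-- ### generic threshold function
section Threshold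

variable (v : Bool) (θ : ℕ)

def hfun : (Fin n → Bool) → ℕ := fun a => if θ ≤ cnt v a then 1 else 0

noncomputable def qv (p : Fin n → ℝ) (j : Fin n) : ℝ := if v then p j else 1 - p j

noncomputable def rv (p c : Fin n → ℝ) (j : Fin n) : ℝ := c j / qv v p j

variable {v θ}

lemma qv_pos {p : Fin n → ℝ} (hp : ∀ i, 0 < p i ∧ p i < 1) (j : Fin n) : 0 < qv v p j := by
  rcases hp j with ⟨h1, h2⟩
  by_cases h : v <;> simp [qv, h] <;> linarith

lemma const0_forall {s : Finset (Fin n)} {b : Fin n → Bool}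
    (h : ov v s b + s.card < θ) : ∀ a ∈ Sub s b, hfun v θ a = 0 := by
  intro a ha
  rw [hfun, if_neg]
  have := (cnt_bounds (v := v) ha).2
  omega

lemma const1_forall {s : Finset (Fin n)} {b : Fin n → Bool}
    (h : θ ≤ ov v s b) : ∀ a ∈ Sub s b, hfun v θ a = 1 := by
  intro a ha
  rw [hfun, if_pos]
  have := (cnt_bounds (v := v) ha).1
  omega

lemma not_Cst_of_act {s : Finset (Fin n)} {b : Fin n → Bool}
    (h1 : ov v s b < θ) (h2 : θ ≤ ov v s b + s.card) : ¬ Cst (hfun v θ) s b := by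
  intro hcst
  have e1 : hfun v θ (fill s b v) = 1 := by
    rw [hfun, if_pos]; rw [cnt_fill_same]; omega
  have e0 : hfun v θ (fill s b (!v)) = 0 := by
    rw [hfun, if_neg]; rw [cnt_fill_other]; omega
  have := hcst (fill s b v) fill_mem_Sub (fill s b (!v)) fill_mem_Sub
  rw [e1, e0] at this
  exact absurd this (by norm_num)

lemma W_const0 {p c : Fin n → ℝ} {s : Finset (Fin n)} {b : Fin n → Bool}
    (h : ov v s b + s.card < θ) : W p c (hfun v θ) 1 s b = 0 :=
  W_const (Cst_of_forall (const0_forall h))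

lemma Pt_const0 {p : Fin n → ℝ} {s : Finset (Fin n)} {b : Fin n → Bool}
    (h : ov v s b + s.card < θ) : Pt p (hfun v θ) 1 s b = 0 := by
  apply Pt_zero
  intro a ha
  rw [const0_forall h a ha]
  norm_num

lemma W_const1 {p c : Fin n → ℝ} {s : Finset (Fin n)} {b : Fin n → Bool}
    (h : θ ≤ ov v s b) : W p c (hfun v θ) 1 s b = 0 :=
  W_const (Cst_of_forall (const1_forall h))

lemma Pt_const1 {p : Fin n → ℝ} {s : Finset (Fin n)} {b : Fin n → Bool}
    (h : θ ≤ ov v s b) : Pt p (hfun v θ) 1 s b = ∏ j ∈ sᶜ, fact p b j := by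
  rw [Pt, ← sum_prr_Sub]
  apply Finset.sum_congr rfl
  intro a ha
  rw [const1_forall h a ha, if_pos rfl]

/-- mass of the constant-1 branch reached by querying `j` and seeing `v` -/
lemma Pt_top {p : Fin n → ℝ} {s : Finset (Fin n)} {b : Fin n → Bool} {j : Fin n} (hj : j ∈ s)
    (h : θ ≤ ov v s b + 1) :
    Pt p (hfun v θ) 1 (s.erase j) (Function.update b j v) = qv v p j * ∏ t ∈ sᶜ, fact p b t := by
  rw [Pt_const1 (by rw [ov_update hj]; simp; omega)]
  rw [Finset.compl_erase, Finset.prod_insert (by simp [hj])]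
  congr 1
  · rw [fact, Function.update_self]
    by_cases h : v <;> simp [qv, h]
  · apply Finset.prod_congr rfl
    intro t ht
    have : t ≠ j := by rintro rfl; simp [hj] at ht
    rw [fact, fact, Function.update_of_ne this]

lemma ratio_min {p c : Fin n → ℝ} (hp : ∀ i, 0 < p i ∧ p i < 1) {s : Finset (Fin n)}
    {istar k : Fin n} (hmin : IsMin (rv v p c) s istar) (hk : k ∈ s) :
    c istar * qv v p k ≤ c k * qv v p istar := by
  rcases eq_or_ne k istar with rfl | hne
  · ring_nf; exact le_refl _
  have hle : rv v p c istar ≤ rv v p c k := by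
    rcases hmin.2 k hk hne with h | ⟨h, -⟩
    · exact le_of_lt h
    · exact le_of_eq h
  rw [rv, rv, div_le_div_iff₀ (qv_pos hp istar) (qv_pos hp k)] at hle
  linarith

end Threshold

section KeyLemma

variable {v : Bool} {θ : ℕ} {p c : Fin n → ℝ}

/-- every low-rank element of `s` is an optimal first query -/
theorem key (hp : ∀ i, 0 < p i ∧ p i < 1) (hc : ∀ i, 0 < c i) :
    ∀ (N : ℕ) (s : Finset (Fin n)) (b : Fin n → Bool), s.card = N →
    ov v s b < θ → θ ≤ ov v s b + s.card →
    ∀ i ∈ s, rank (rv v p c) s i + ov v s b < θ →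
    W p c (hfun v θ) 1 s b = c i * Pt p (hfun v θ) 1 s b
      + W p c (hfun v θ) 1 (s.erase i) (Function.update b i false)
      + W p c (hfun v θ) 1 (s.erase i) (Function.update b i true) := by
  intro N
  induction N using Nat.strong_induction_on with
  | _ N IH =>
  intro s b hcard hact1 hact2 i hi hranki
  have hscard : 0 < s.card := by omega
  have hsne : s.Nonempty := Finset.card_pos.1 hscard
  obtain ⟨istar, hmin⟩ := exists_isMin (rv v p c) hsne
  have histar : istar ∈ s := hmin.1
  -- generic upper bound, valid at active or constant-0 states
  have WLE : ∀ (s' : Finset (Fin n)) (b' : Fin n → Bool) (k : Fin n), k ∈ s' →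
      ov v s' b' < θ →
      W p c (hfun v θ) 1 s' b' ≤ c k * Pt p (hfun v θ) 1 s' b'
        + W p c (hfun v θ) 1 (s'.erase k) (Function.update b' k false)
        + W p c (hfun v θ) 1 (s'.erase k) (Function.update b' k true) := by
    intro s' b' k hk hov
    by_cases hact' : θ ≤ ov v s' b' + s'.card
    · exact W_le (not_Cst_of_act hov hact') hk
    · push_neg at hact'
      have hpos : 0 < s'.card := Finset.card_pos.2 ⟨k, hk⟩
      have hb : ∀ x : Bool,
          W p c (hfun v θ) 1 (s'.erase k) (Function.update b' k x) = 0 := by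
        intro x
        apply W_const0
        rw [ov_update hk x, Finset.card_erase_of_mem hk]
        by_cases hx : x = v
        · rw [if_pos hx]; omega
        · rw [if_neg hx]; omega
      rw [W_const0 (by omega), Pt_const0 (by omega), hb false, hb true]
      norm_num
  -- generic exact expansion, valid at active or constant-0 states
  have EXP : ∀ (s' : Finset (Fin n)) (b' : Fin n → Bool) (j : Fin n), s'.card < N → j ∈ s' →
      ov v s' b' < θ → rank (rv v p c) s' j + ov v s' b' < θ →
      W p c (hfun v θ) 1 s' b' = c j * Pt p (hfun v θ) 1 s' b'
        + W p c (hfun v θ) 1 (s'.erase j) (Function.update b' j false)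
        + W p c (hfun v θ) 1 (s'.erase j) (Function.update b' j true) := by
    intro s' b' j hlt hj hov hrank
    by_cases hact' : θ ≤ ov v s' b' + s'.card
    · exact IH s'.card hlt s' b' rfl hov hact' j hj hrank
    · push_neg at hact'
      have hpos : 0 < s'.card := Finset.card_pos.2 ⟨j, hj⟩
      have hb : ∀ x : Bool,
          W p c (hfun v θ) 1 (s'.erase j) (Function.update b' j x) = 0 := by
        intro x
        apply W_const0
        rw [ov_update hj x, Finset.card_erase_of_mem hj]
        by_cases hx : x = v
        · rw [if_pos hx]; omega
        · rw [if_neg hx]; omega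
      rw [W_const0 (by omega), Pt_const0 (by omega), hb false, hb true]
      ring
  -- the minimum-key element is an optimal first query
  have mono : ∀ k ∈ s,
      c istar * Pt p (hfun v θ) 1 s b
        + W p c (hfun v θ) 1 (s.erase istar) (Function.update b istar false)
        + W p c (hfun v θ) 1 (s.erase istar) (Function.update b istar true)
      ≤ c k * Pt p (hfun v θ) 1 s b
        + W p c (hfun v θ) 1 (s.erase k) (Function.update b k false)
        + W p c (hfun v θ) 1 (s.erase k) (Function.update b k true) := by
    intro k hk
    rcases eq_or_ne k istar with rfl | hkne
    · exact le_refl _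
    have hne' : istar ≠ k := fun h => hkne h.symm
    have hkerase : k ∈ s.erase istar := Finset.mem_erase.2 ⟨hkne, hk⟩
    have hierase : istar ∈ s.erase k := Finset.mem_erase.2 ⟨hne', histar⟩
    have hcardk : (s.erase k).card < N := by
      rw [Finset.card_erase_of_mem hk]; omega
    have hminK : IsMin (rv v p c) (s.erase k) istar := isMin_erase hmin hne'
    have hcomm : ∀ x y : Bool,
        W p c (hfun v θ) 1 ((s.erase istar).erase k)
          (Function.update (Function.update b istar x) k y) =
        W p c (hfun v θ) 1 ((s.erase k).erase istar)
          (Function.update (Function.update b k y) istar x) := by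
      intro x y
      rw [Finset.erase_right_comm, Function.update_comm hne']
    by_cases hZ2 : ov v s b + 2 ≤ θ
    · -- Z ≥ 2 : both branches of each query are active or constant-0
      have hovk : ∀ x : Bool, ov v (s.erase k) (Function.update b k x) < θ := by
        intro x
        rw [ov_update hk x]
        by_cases hx : x = v
        · rw [if_pos hx]; omega
        · rw [if_neg hx]; omega
      have hovi : ∀ x : Bool, ov v (s.erase istar) (Function.update b istar x) < θ := by
        intro x
        rw [ov_update histar x]
        by_cases hx : x = v
        · rw [if_pos hx]; omega
        · rw [if_neg hx]; omega
      have hexp : ∀ x : Bool,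
          W p c (hfun v θ) 1 (s.erase k) (Function.update b k x) =
          c istar * Pt p (hfun v θ) 1 (s.erase k) (Function.update b k x)
            + W p c (hfun v θ) 1 ((s.erase k).erase istar)
                (Function.update (Function.update b k x) istar false)
            + W p c (hfun v θ) 1 ((s.erase k).erase istar)
                (Function.update (Function.update b k x) istar true) := by
        intro x
        apply EXP _ _ istar hcardk hierase (hovk x)
        rw [isMin_rank_zero hminK]
        simpa using hovk x
      have hlei : ∀ x : Bool,
          W p c (hfun v θ) 1 (s.erase istar) (Function.update b istar x) ≤
          c k * Pt p (hfun v θ) 1 (s.erase istar) (Function.update b istar x)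
            + W p c (hfun v θ) 1 ((s.erase istar).erase k)
                (Function.update (Function.update b istar x) k false)
            + W p c (hfun v θ) 1 ((s.erase istar).erase k)
                (Function.update (Function.update b istar x) k true) := by
        intro x
        exact WLE _ _ k hkerase (hovi x)
      have hPtk : Pt p (hfun v θ) 1 (s.erase k) (Function.update b k false)
          + Pt p (hfun v θ) 1 (s.erase k) (Function.update b k true)
          = Pt p (hfun v θ) 1 s b := (Pt_split hk).symm
      have hPti : Pt p (hfun v θ) 1 (s.erase istar) (Function.update b istar false)
          + Pt p (hfun v θ) 1 (s.erase istar) (Function.update b istar true)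
          = Pt p (hfun v θ) 1 s b := (Pt_split histar).symm
      have e0 := hexp false
      have e1 := hexp true
      have l0 := hlei false
      have l1 := hlei true
      rw [hcomm false false, hcomm false true] at l0
      rw [hcomm true false, hcomm true true] at l1
      have hm1 : c istar * Pt p (hfun v θ) 1 (s.erase k) (Function.update b k false)
          + c istar * Pt p (hfun v θ) 1 (s.erase k) (Function.update b k true)
          = c istar * Pt p (hfun v θ) 1 s b := by rw [← mul_add, hPtk]
      have hm2 : c k * Pt p (hfun v θ) 1 (s.erase istar) (Function.update b istar false)
          + c k * Pt p (hfun v θ) 1 (s.erase istar) (Function.update b istar true)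
          = c k * Pt p (hfun v θ) 1 s b := by rw [← mul_add, hPti]
      linarith
    · -- Z = 1
      have hθ : θ = ov v s b + 1 := by omega
      have hm2 : 2 ≤ s.card := Finset.one_lt_card.2 ⟨istar, histar, k, hk, hne'⟩
      -- swap helpers
      have hswW : ∀ (s' : Finset (Fin n)) (b' : Fin n → Bool) (j : Fin n),
          W p c (hfun v θ) 1 (s'.erase j) (Function.update b' j false)
          + W p c (hfun v θ) 1 (s'.erase j) (Function.update b' j true)
          = W p c (hfun v θ) 1 (s'.erase j) (Function.update b' j v)
          + W p c (hfun v θ) 1 (s'.erase j) (Function.update b' j (!v)) := by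
        intro s' b' j
        cases v <;> simp [add_comm]
      have hswPt : ∀ (s' : Finset (Fin n)) (b' : Fin n → Bool) (j : Fin n), j ∈ s' →
          Pt p (hfun v θ) 1 s' b'
          = Pt p (hfun v θ) 1 (s'.erase j) (Function.update b' j v)
          + Pt p (hfun v θ) 1 (s'.erase j) (Function.update b' j (!v)) := by
        intro s' b' j hj
        rw [Pt_split hj]
        cases v <;> simp [add_comm]
      -- constant-1 branches
      have hWv : ∀ j ∈ s, W p c (hfun v θ) 1 (s.erase j) (Function.update b j v) = 0 := by
        intro j hj
        apply W_const1
        rw [ov_update hj v, if_pos rfl]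
        omega
      -- ov of the (!v)-branches
      have hovnb : ∀ j ∈ s, ov v (s.erase j) (Function.update b j (!v)) = ov v s b := by
        intro j hj
        rw [ov_update hj (!v), if_neg (by simp)]
        omega
      -- the k,!v branch is active; expand it by istar
      have hkb : W p c (hfun v θ) 1 (s.erase k) (Function.update b k (!v)) =
          c istar * Pt p (hfun v θ) 1 (s.erase k) (Function.update b k (!v))
            + W p c (hfun v θ) 1 ((s.erase k).erase istar)
                (Function.update (Function.update b k (!v)) istar false)
            + W p c (hfun v θ) 1 ((s.erase k).erase istar)
                (Function.update (Function.update b k (!v)) istar true) := by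
        apply EXP _ _ istar hcardk hierase (by rw [hovnb k hk]; omega)
        rw [isMin_rank_zero hminK, hovnb k hk]
        omega
      -- inner constant-1 states
      have hin1 : W p c (hfun v θ) 1 ((s.erase k).erase istar)
          (Function.update (Function.update b k (!v)) istar v) = 0 := by
        apply W_const1
        rw [ov_update hierase v, if_pos rfl, hovnb k hk]
        omega
      have hin2 : W p c (hfun v θ) 1 ((s.erase istar).erase k)
          (Function.update (Function.update b istar (!v)) k v) = 0 := by
        apply W_const1
        rw [ov_update hkerase v, if_pos rfl, hovnb istar histar]
        omega
      -- bound the istar-side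
      have hlei : W p c (hfun v θ) 1 (s.erase istar) (Function.update b istar (!v)) ≤
          c k * Pt p (hfun v θ) 1 (s.erase istar) (Function.update b istar (!v))
            + W p c (hfun v θ) 1 ((s.erase istar).erase k)
                (Function.update (Function.update b istar (!v)) k false)
            + W p c (hfun v θ) 1 ((s.erase istar).erase k)
                (Function.update (Function.update b istar (!v)) k true) := by
        exact WLE _ _ k hkerase (by rw [hovnb istar histar]; omega)
      -- ratio comparison on the top branches
      have hR0 : (0:ℝ) ≤ ∏ t ∈ sᶜ, fact p b t :=
        Finset.prod_nonneg (fun t _ => fact_nonneg hp b t)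
      have htopk : Pt p (hfun v θ) 1 (s.erase k) (Function.update b k v)
          = qv v p k * ∏ t ∈ sᶜ, fact p b t := Pt_top hk (by omega)
      have htopi : Pt p (hfun v θ) 1 (s.erase istar) (Function.update b istar v)
          = qv v p istar * ∏ t ∈ sᶜ, fact p b t := Pt_top histar (by omega)
      have hratio : c istar * Pt p (hfun v θ) 1 (s.erase k) (Function.update b k v)
          ≤ c k * Pt p (hfun v θ) 1 (s.erase istar) (Function.update b istar v) := by
        rw [htopk, htopi]
        have := ratio_min hp hmin hk
        nlinarith
      -- put everything together
      have eWk := hswW s b k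
      have eWi := hswW s b istar
      have ePk := hswPt s b k hk
      have ePi := hswPt s b istar histar
      have eIk := hswW (s.erase k) (Function.update b k (!v)) istar
      have eIi := hswW (s.erase istar) (Function.update b istar (!v)) k
      -- final arithmetic
      have hPtib : c k * Pt p (hfun v θ) 1 s b
          = c k * Pt p (hfun v θ) 1 (s.erase istar) (Function.update b istar v)
          + c k * Pt p (hfun v θ) 1 (s.erase istar) (Function.update b istar (!v)) := by
        rw [ePi]; ring
      have hPtkb : c istar * Pt p (hfun v θ) 1 s b
          = c istar * Pt p (hfun v θ) 1 (s.erase k) (Function.update b k v)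
          + c istar * Pt p (hfun v θ) 1 (s.erase k) (Function.update b k (!v)) := by
        rw [ePk]; ring
      have hWvk := hWv k hk
      have hWvi := hWv istar histar
      -- the state (k!v, istar!v) equals (istar!v, k!v)
      have hfincomm : W p c (hfun v θ) 1 ((s.erase istar).erase k)
            (Function.update (Function.update b istar (!v)) k (!v))
          = W p c (hfun v θ) 1 ((s.erase k).erase istar)
            (Function.update (Function.update b k (!v)) istar (!v)) :=
        hcomm (!v) (!v)
      linarith [hlei, hkb, eWk, eWi, eIk, eIi, hin1, hin2, hratio, hfincomm,
        hPtib, hPtkb, hWvk, hWvi]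
  -- conclude W = x(istar)
  obtain ⟨k0, hk0, hspec⟩ := W_spec (p := p) (c := c) (ℓ := 1)
    (not_Cst_of_act hact1 hact2)
  have hWistar : W p c (hfun v θ) 1 s b
      = c istar * Pt p (hfun v θ) 1 s b
        + W p c (hfun v θ) 1 (s.erase istar) (Function.update b istar false)
        + W p c (hfun v θ) 1 (s.erase istar) (Function.update b istar true) := by
    refine le_antisymm (W_le (not_Cst_of_act hact1 hact2) histar) ?_
    rw [hspec]
    exact mono k0 hk0
  rcases eq_or_ne i istar with rfl | hne2
  · exact hWistar
  · -- x i = x istar for any low-rank i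
    have hZ2 : ov v s b + 2 ≤ θ := by
      by_contra hcon
      push_neg at hcon
      have hri0 : rank (rv v p c) s i = 0 := by omega
      exact hne2 (isMin_unique (rank_zero_isMin hi hri0) hmin)
    have hne' : istar ≠ i := fun h => hne2 h.symm
    have hierase2 : i ∈ s.erase istar := Finset.mem_erase.2 ⟨hne2, hi⟩
    have histar2 : istar ∈ s.erase i := Finset.mem_erase.2 ⟨hne', histar⟩
    have hcardi : (s.erase i).card < N := by
      rw [Finset.card_erase_of_mem hi]; omega
    have hcardistar : (s.erase istar).card < N := by
      rw [Finset.card_erase_of_mem histar]; omega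
    have hminI : IsMin (rv v p c) (s.erase i) istar := isMin_erase hmin hne'
    have hcomm2 : ∀ x y : Bool,
        W p c (hfun v θ) 1 ((s.erase istar).erase i)
          (Function.update (Function.update b istar x) i y) =
        W p c (hfun v θ) 1 ((s.erase i).erase istar)
          (Function.update (Function.update b i y) istar x) := by
      intro x y
      rw [Finset.erase_right_comm, Function.update_comm hne']
    have hovi2 : ∀ x : Bool, ov v (s.erase i) (Function.update b i x) < θ := by
      intro x
      rw [ov_update hi x]
      by_cases hx : x = v
      · rw [if_pos hx]; omega
      · rw [if_neg hx]; omega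
    have hovs2 : ∀ x : Bool, ov v (s.erase istar) (Function.update b istar x) < θ := by
      intro x
      rw [ov_update histar x]
      by_cases hx : x = v
      · rw [if_pos hx]; omega
      · rw [if_neg hx]; omega
    have hri := rank_erase_min hmin hi hne2
    have hexpI : ∀ x : Bool,
        W p c (hfun v θ) 1 (s.erase i) (Function.update b i x) =
        c istar * Pt p (hfun v θ) 1 (s.erase i) (Function.update b i x)
          + W p c (hfun v θ) 1 ((s.erase i).erase istar)
              (Function.update (Function.update b i x) istar false)
          + W p c (hfun v θ) 1 ((s.erase i).erase istar)
              (Function.update (Function.update b i x) istar true) := by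
      intro x
      apply EXP _ _ istar hcardi histar2 (hovi2 x)
      rw [isMin_rank_zero hminI]
      simpa using hovi2 x
    have hexpS : ∀ x : Bool,
        W p c (hfun v θ) 1 (s.erase istar) (Function.update b istar x) =
        c i * Pt p (hfun v θ) 1 (s.erase istar) (Function.update b istar x)
          + W p c (hfun v θ) 1 ((s.erase istar).erase i)
              (Function.update (Function.update b istar x) i false)
          + W p c (hfun v θ) 1 ((s.erase istar).erase i)
              (Function.update (Function.update b istar x) i true) := by
      intro x
      apply EXP _ _ i hcardistar hierase2 (hovs2 x)
      have hrb : rank (rv v p c) (s.erase istar) i + 1 = rank (rv v p c) s i := hri.symm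
      have hovb : ov v (s.erase istar) (Function.update b istar x) ≤ ov v s b + 1 := by
        rw [ov_update histar x]
        split <;> omega
      omega
    have hPtk : Pt p (hfun v θ) 1 (s.erase i) (Function.update b i false)
        + Pt p (hfun v θ) 1 (s.erase i) (Function.update b i true)
        = Pt p (hfun v θ) 1 s b := (Pt_split hi).symm
    have hPti : Pt p (hfun v θ) 1 (s.erase istar) (Function.update b istar false)
        + Pt p (hfun v θ) 1 (s.erase istar) (Function.update b istar true)
        = Pt p (hfun v θ) 1 s b := (Pt_split histar).symm
    have e0 := hexpI false
    have e1 := hexpI true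
    have f0 := hexpS false
    have f1 := hexpS true
    rw [hcomm2 false false, hcomm2 false true] at f0
    rw [hcomm2 true false, hcomm2 true true] at f1
    have hm1 : c istar * Pt p (hfun v θ) 1 (s.erase i) (Function.update b i false)
        + c istar * Pt p (hfun v θ) 1 (s.erase i) (Function.update b i true)
        = c istar * Pt p (hfun v θ) 1 s b := by rw [← mul_add, hPtk]
    have hm2 : c i * Pt p (hfun v θ) 1 (s.erase istar) (Function.update b istar false)
        + c i * Pt p (hfun v θ) 1 (s.erase istar) (Function.update b istar true)
        = c i * Pt p (hfun v θ) 1 s b := by rw [← mul_add, hPti]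
    rw [hWistar]
    linarith

end KeyLemma


-- ### counting bridges

lemma cnt_true_eq (a : Fin n → Bool) : cnt true a = N1 a := rfl

lemma cnt_add (a : Fin n → Bool) : cnt false a + cnt true a = n := by
  have h1 := Finset.card_filter_add_card_filter_not
    (s := (univ : Finset (Fin n))) (p := fun j => a j = false)
  have h2 : (univ.filter (fun j => ¬ a j = false)) = univ.filter (fun j => a j = true) := by
    apply Finset.filter_congr
    intro j _
    simp
  rw [h2, Finset.card_univ, Fintype.card_fin] at h1
  exact h1

lemma ov_add (s : Finset (Fin n)) (b : Fin n → Bool) :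
    ov false s b + ov true s b + s.card = n := by
  rw [ov, ov]
  have h1 := Finset.card_filter_add_card_filter_not
    (s := sᶜ) (p := fun j => b j = false)
  have h2 : (sᶜ.filter (fun j => ¬ b j = false)) = sᶜ.filter (fun j => b j = true) := by
    apply Finset.filter_congr; intro j _; simp
  rw [h2] at h1
  have h3 : sᶜ.card = n - s.card := by
    rw [Finset.card_compl, Fintype.card_fin]
  have h4 : s.card ≤ n := by
    have := Finset.card_le_card (Finset.subset_univ s)
    rwa [Finset.card_univ, Fintype.card_fin] at this
  omega

-- ### the Pt decomposition for the interval function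

variable {α β : ℕ} {p c : Fin n → ℝ}

lemma Pt_ABC (hα1 : 1 ≤ α) (hαβ : α < β) (hβn : β ≤ n) (s : Finset (Fin n)) (b : Fin n → Bool) :
    Pt p (fun a => if α ≤ N1 a ∧ N1 a < β then 1 else 0) 0 s b
    = Pt p (hfun false (n + 1 - α)) 1 s b + Pt p (hfun true β) 1 s b := by
  rw [Pt, Pt, Pt, ← Finset.sum_add_distrib]
  apply Finset.sum_congr rfl
  intro a _
  have hca := cnt_add a
  have hct := cnt_true_eq a
  rcases lt_or_ge (N1 a) α with h1 | h1
  · have e1 : (if α ≤ N1 a ∧ N1 a < β then 1 else 0) = 0 := by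
      rw [if_neg]; omega
    have e2 : hfun false (n + 1 - α) a = 1 := by
      rw [hfun, if_pos]; omega
    have e3 : hfun true β a = 0 := by
      rw [hfun, if_neg]; omega
    rw [e1, e2, e3]; norm_num
  · rcases lt_or_ge (N1 a) β with h2 | h2
    · have e1 : (if α ≤ N1 a ∧ N1 a < β then 1 else 0) = 1 := by
        rw [if_pos]; omega
      have e2 : hfun false (n + 1 - α) a = 0 := by
        rw [hfun, if_neg]; omega
      have e3 : hfun true β a = 0 := by
        rw [hfun, if_neg]; omega
      rw [e1, e2, e3]; norm_num
    · have e1 : (if α ≤ N1 a ∧ N1 a < β then 1 else 0) = 0 := by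
        rw [if_neg]; omega
      have e2 : hfun false (n + 1 - α) a = 0 := by
        rw [hfun, if_neg]; omega
      have e3 : hfun true β a = 1 := by
        rw [hfun, if_pos]; omega
      rw [e1, e2, e3]; norm_num

/-- complement-value congruence: evaluating the target through a complementary function -/
lemma WEQ (h1 h2 : (Fin n → Bool) → ℕ) :
    ∀ (N : ℕ) (s : Finset (Fin n)) (b : Fin n → Bool), s.card = N →
    (∀ a ∈ Sub s b, h1 a + h2 a = 1) →
    W p c h1 0 s b = W p c h2 1 s b := by
  intro N
  induction N using Nat.strong_induction_on with
  | _ N IH =>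
  intro s b hcard hsum
  have hPt : Pt p h1 0 s b = Pt p h2 1 s b := by
    rw [Pt, Pt]
    apply Finset.sum_congr rfl
    intro a ha
    have := hsum a ha
    by_cases h : h1 a = 0
    · rw [if_pos h, if_pos (by omega)]
    · rw [if_neg h, if_neg (by omega)]
  by_cases hcst : Cst h1 s b
  · have hcst2 : Cst h2 s b := by
      intro a ha a' ha'
      have e1 := hsum a ha
      have e2 := hsum a' ha'
      have := hcst a ha a' ha'
      omega
    rw [W_const hcst, W_const hcst2]
  · have hcst2 : ¬ Cst h2 s b := by
      intro hc2
      apply hcst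
      intro a ha a' ha'
      have e1 := hsum a ha
      have e2 := hsum a' ha'
      have := hc2 a ha a' ha'
      omega
    have hbr : ∀ (i : Fin n), i ∈ s → ∀ x : Bool,
        W p c h1 0 (s.erase i) (Function.update b i x)
        = W p c h2 1 (s.erase i) (Function.update b i x) := by
      intro i hi x
      have hlt : (s.erase i).card < N := by
        rw [Finset.card_erase_of_mem hi]
        have : 0 < s.card := Finset.card_pos.2 ⟨i, hi⟩
        omega
      exact IH _ hlt _ _ rfl (fun a ha => hsum a (Sub_erase_subset hi x ha))
    apply le_antisymm
    · obtain ⟨i, hi, heq⟩ := W_spec (p := p) (c := c) (ℓ := 1) hcst2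
      rw [heq, ← hPt, ← hbr i hi false, ← hbr i hi true]
      exact W_le hcst hi
    · obtain ⟨i, hi, heq⟩ := W_spec (p := p) (c := c) (ℓ := 0) hcst
      rw [heq, hPt, hbr i hi false, hbr i hi true]
      exact W_le hcst2 hi

/-- the main additivity theorem at the level of `W` -/
theorem ADD (hp : ∀ i, 0 < p i ∧ p i < 1) (hc : ∀ i, 0 < c i)
    (hα1 : 1 ≤ α) (hαβ : α < β) (hβn : β ≤ n) :
    ∀ (N : ℕ) (s : Finset (Fin n)) (b : Fin n → Bool), s.card = N →
    W p c (fun a => if α ≤ N1 a ∧ N1 a < β then 1 else 0) 0 s b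
    = W p c (hfun false (n + 1 - α)) 1 s b + W p c (hfun true β) 1 s b := by
  intro N
  induction N using Nat.strong_induction_on with
  | _ N IH =>
  intro s b hcard
  have hovadd := ov_add s b
  have hNa : ∀ a ∈ Sub s b, ov true s b ≤ N1 a ∧ N1 a ≤ ov true s b + s.card := by
    intro a ha
    have := cnt_bounds (v := true) ha
    rwa [cnt_true_eq] at this
  have hBf : ∀ a : Fin n → Bool, cnt false a + N1 a = n := by
    intro a; have := cnt_add a; rwa [cnt_true_eq] at this
  rcases lt_or_ge (ov true s b + s.card) α with hC1 | hge1
  · -- C1 : entire subcube inside M¹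
    have hA0 : Cst (fun a => if α ≤ N1 a ∧ N1 a < β then 1 else 0) s b := by
      apply Cst_of_forall (vv := 0)
      intro a ha
      have := hNa a ha
      split_ifs <;> omega
    rw [W_const hA0, W_const1 (v := false) (θ := n + 1 - α) (by omega),
      W_const0 (v := true) (θ := β) (by omega)]
    norm_num
  · rcases lt_or_ge (ov true s b) β with hltβ | hC2
    · rcases lt_or_ge (ov true s b) α with hltα | hgeα
      · rcases lt_or_ge (ov true s b + s.card) β with hC4 | hC6
        · -- C4 : the lower threshold is active, upper is settled
          have hWC : W p c (hfun true β) 1 s b = 0 := W_const0 (by omega)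
          have hWeq := WEQ (p := p) (c := c)
            (fun a => if α ≤ N1 a ∧ N1 a < β then 1 else 0) (hfun false (n + 1 - α))
            N s b hcard ?_
          · rw [hWeq, hWC]; ring
          · intro a ha
            have hb := hNa a ha
            have hf := hBf a
            simp only [hfun]
            split_ifs <;> omega
        · -- C6 : both thresholds active — the main case
          have hactB1 : ov false s b < n + 1 - α := by omega
          have hactB2 : n + 1 - α ≤ ov false s b + s.card := by omega
          have hactC1 : ov true s b < β := hltβ
          have hactC2 : β ≤ ov true s b + s.card := hC6
          have hAnc : ¬ Cst (fun a => if α ≤ N1 a ∧ N1 a < β then 1 else 0) s b := by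
            intro hcst
            obtain ⟨a1, ha1, hcnt1⟩ := exists_cnt_eq (v := true) (s := s) (b := b)
              (k := α - ov true s b) (by omega)
            obtain ⟨a2, ha2, hcnt2⟩ := exists_cnt_eq (v := true) (s := s) (b := b)
              (k := s.card) (le_refl _)
            rw [cnt_true_eq] at hcnt1 hcnt2
            have hthis : (if α ≤ N1 a1 ∧ N1 a1 < β then 1 else 0)
                = (if α ≤ N1 a2 ∧ N1 a2 < β then (1:ℕ) else 0) := hcst a1 ha1 a2 ha2
            split_ifs at hthis <;> omega
          have hbr : ∀ i ∈ s, ∀ x : Bool,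
              W p c (fun a => if α ≤ N1 a ∧ N1 a < β then 1 else 0) 0
                (s.erase i) (Function.update b i x)
              = W p c (hfun false (n + 1 - α)) 1 (s.erase i) (Function.update b i x)
                + W p c (hfun true β) 1 (s.erase i) (Function.update b i x) := by
            intro i hi x
            have hlt : (s.erase i).card < N := by
              rw [Finset.card_erase_of_mem hi]
              have : 0 < s.card := Finset.card_pos.2 ⟨i, hi⟩
              omega
            exact IH _ hlt _ _ rfl
          obtain ⟨i, hi, hr1, hr2⟩ := exists_common (r1 := rv false p c) (r2 := rv true p c)
            (s := s) (Z1 := n + 1 - α - ov false s b) (Z2 := β - ov true s b)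
            (by omega) (by omega) (by omega)
          have hkeyB := key (v := false) (θ := n + 1 - α) hp hc s.card s b rfl
            hactB1 hactB2 i hi (by omega)
          have hkeyC := key (v := true) (θ := β) hp hc s.card s b rfl
            hactC1 hactC2 i hi (by omega)
          have hPtd := Pt_ABC (p := p) hα1 hαβ hβn s b
          apply le_antisymm
          · have hWle := W_le (p := p) (c := c) (ℓ := 0) hAnc hi
            have hbF := hbr i hi false
            have hbT := hbr i hi true
            have hmul : c i * Pt p (fun a => if α ≤ N1 a ∧ N1 a < β then 1 else 0) 0 s b
                = c i * Pt p (hfun false (n + 1 - α)) 1 s b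
                  + c i * Pt p (hfun true β) 1 s b := by
              rw [hPtd]; ring
            linarith
          · obtain ⟨k0, hk0, hspec⟩ := W_spec (p := p) (c := c) (ℓ := 0) hAnc
            have hbF := hbr k0 hk0 false
            have hbT := hbr k0 hk0 true
            have hWB_le := W_le (p := p) (c := c) (ℓ := 1)
              (not_Cst_of_act hactB1 hactB2) hk0
            have hWC_le := W_le (p := p) (c := c) (ℓ := 1)
              (not_Cst_of_act hactC1 hactC2) hk0
            have hmul : c k0 * Pt p (fun a => if α ≤ N1 a ∧ N1 a < β then 1 else 0) 0 s b
                = c k0 * Pt p (hfun false (n + 1 - α)) 1 s b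
                  + c k0 * Pt p (hfun true β) 1 s b := by
              rw [hPtd]; ring
            linarith
      · rcases lt_or_ge (ov true s b + s.card) β with hC3 | hC5
        · -- C3 : entire subcube inside M²
          have hA1 : Cst (fun a => if α ≤ N1 a ∧ N1 a < β then 1 else 0) s b := by
            apply Cst_of_forall (vv := 1)
            intro a ha
            have := hNa a ha
            split_ifs <;> omega
          rw [W_const hA1, W_const0 (v := false) (θ := n + 1 - α) (by omega),
            W_const0 (v := true) (θ := β) (by omega)]
          norm_num
        · -- C5 : the upper threshold is active, lower settled
          have hWB : W p c (hfun false (n + 1 - α)) 1 s b = 0 := W_const0 (by omega)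
          have hWeq := WEQ (p := p) (c := c)
            (fun a => if α ≤ N1 a ∧ N1 a < β then 1 else 0) (hfun true β)
            N s b hcard ?_
          · rw [hWeq, hWB]; ring
          · intro a ha
            have hb := hNa a ha
            have hct := cnt_true_eq a
            simp only [hfun]
            split_ifs <;> omega
    · -- C2 : entire subcube inside M³
      have hA0 : Cst (fun a => if α ≤ N1 a ∧ N1 a < β then 1 else 0) s b := by
        apply Cst_of_forall (vv := 0)
        intro a ha
        have := hNa a ha
        rw [if_neg]; omega
      rw [W_const hA0, W_const0 (v := false) (θ := n + 1 - α) (by omega),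
        W_const1 (v := true) (θ := β) (by omega)]
      norm_num


end S17

theorem stmt17 {n : ℕ} (hn : 2 ≤ n) (p c : Fin n → ℝ)
    (hp : ∀ i, 0 < p i ∧ p i < 1) (hc : ∀ i, 0 < c i)
    (α β : ℕ) (hα1 : 1 ≤ α) (hαβ : α < β) (hβn : β ≤ n) :
    minLCost p c (fun a => if α ≤ N1 a ∧ N1 a < β then 1 else 0) 0 +
      minLCost p c (fun a => if α ≤ N1 a ∧ N1 a < β then 1 else 0) 1 =
    minLCost p c (fun a => if N1 a < α then 1 else 0) 1 +
      minLCost p c (fun a => if α ≤ N1 a ∧ N1 a < β then 1 else 0) 1 +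
      minLCost p c (fun a => if β ≤ N1 a then 1 else 0) 1 := by
  classical
  have hBfun : (fun a : Fin n → Bool => if N1 a < α then 1 else 0)
      = S17.hfun false (n + 1 - α) := by
    funext a
    have h1 := S17.cnt_add a
    have h2 := S17.cnt_true_eq a
    simp only [S17.hfun]
    split_ifs <;> omega
  have hCfun : (fun a : Fin n → Bool => if β ≤ N1 a then 1 else 0)
      = S17.hfun true β := by
    funext a
    have h2 := S17.cnt_true_eq a
    simp only [S17.hfun]
    split_ifs <;> omega
  have e0 := S17.minLCost_eq_W hp hc
    (fun a => if α ≤ N1 a ∧ N1 a < β then 1 else 0) 0 (fun _ => true)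
  have eB := S17.minLCost_eq_W hp hc
    (fun a => if N1 a < α then 1 else 0) 1 (fun _ => true)
  have eC := S17.minLCost_eq_W hp hc
    (fun a => if β ≤ N1 a then 1 else 0) 1 (fun _ => true)
  have hadd := S17.ADD (p := p) (c := c) hp hc hα1 hαβ hβn
    (Finset.univ : Finset (Fin n)).card Finset.univ (fun _ => true) rfl
  rw [e0, eB, eC, hBfun, hCfun]
  linarith
end

section
/- For arbitrary positive costs c, let 1 ≤ k ≤ n and let f_k be the k-of-n function, f_k(a) = 1 iff N₁(a) ≥ k. Let σ list the indices in nondecreasing order of c i / p i, and for each a with f_k(a) = 1 let v₁(a) be the sum of c i over the shortest σ-prefix containing k indices i with a i = true; let σ' list the indices in nondecreasing order of c i / (1 − p i), and for each a with f_k(a) = 0 let v₀(a) be the sum of c i over the shortest σ'-prefix containing n − k + 1 indices i with a i = false. Then for every decision tree T evaluating f_k: Σ_{a : f_k(a)=1} v₁(a)·Pr(a) ≤ (1-cost of T) and Σ_{a : f_k(a)=0} v₀(a)·Pr(a) ≤ (0-cost of T). That is, querying in nondecreasing c/p order is 1-optimal and querying in nondecreasing c/(1−p) order is 0-optimal for k-of-n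 functions. -/
open Finset

/-- Total cost of the shortest prefix of `l` containing at least `m` indices
selected by `sel`. -/
noncomputable def stopCost {n : ℕ} (c : Fin n → ℝ) (sel : Fin n → Bool) (m : ℕ)
    (l : List (Fin n)) : ℝ :=
  ((l.take (sInf {k | m ≤ ((l.take k).filter sel).length})).map c).sum

namespace Aux
variable {n : ℕ}

def cntL (l : List (Fin n)) (a : Fin n → Bool) : ℕ := (l.filter a).length

noncomputable def phi (l : List (Fin n)) (m : ℕ) (a : Fin n → Bool) : ℝ :=
  if m ≤ cntL l a then 1 else 0

noncomputable def Vpay (c : Fin n → ℝ) : List (Fin n) → ℕ → (Fin n → Bool) → ℝ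
  | _, 0, _ => 0
  | [], _+1, _ => 0
  | i :: l, m+1, a => c i + Vpay c l (if a i then m else m+1) a

noncomputable def tc (cst : Fin n → ℝ) : DTree n → ℕ → (Fin n → Bool) → ℝ
  | _, 0, _ => 0
  | .leaf _, _+1, _ => 0
  | .node i t0 t1, m+1, a => cst i + (if a i then tc cst t1 m a else tc cst t0 (m+1) a)

@[simp] lemma Vpay_zero (c : Fin n → ℝ) (l : List (Fin n)) (a) : Vpay c l 0 a = 0 := by
  cases l <;> rfl

@[simp] lemma Vpay_nil (c : Fin n → ℝ) (m : ℕ) (a) : Vpay c [] m a = 0 := by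
  cases m <;> rfl

lemma Vpay_cons (c : Fin n → ℝ) (i : Fin n) (l : List (Fin n)) (m : ℕ) (a) :
    Vpay c (i :: l) (m+1) a = c i + Vpay c l (if a i then m else m+1) a := rfl

@[simp] lemma tc_zero (cst : Fin n → ℝ) (T : DTree n) (a) : tc cst T 0 a = 0 := by
  cases T <;> rfl

@[simp] lemma tc_leaf (cst : Fin n → ℝ) (v m : ℕ) (a) : tc cst (.leaf v) m a = 0 := by
  cases m <;> rfl

lemma tc_node (cst : Fin n → ℝ) (i : Fin n) (t0 t1 : DTree n) (m : ℕ) (a) :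
    tc cst (.node i t0 t1) (m+1) a
      = cst i + (if a i then tc cst t1 m a else tc cst t0 (m+1) a) := rfl

@[simp] lemma cntL_nil (a : Fin n → Bool) : cntL [] a = 0 := rfl

lemma cntL_cons (i : Fin n) (l : List (Fin n)) (a) :
    cntL (i :: l) a = (if a i then 1 else 0) + cntL l a := by
  simp only [cntL, List.filter_cons]
  cases h : a i <;> simp <;> omega

lemma phi_cons (i : Fin n) (l : List (Fin n)) (m : ℕ) (a) :
    phi (i :: l) (m+1) a = if a i then phi l m a else phi l (m+1) a := by
  simp only [phi, cntL_cons]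
  cases h : a i
  · simp
  · simp only [if_true]
    have : m + 1 ≤ 1 + cntL l a ↔ m ≤ cntL l a := by omega
    simp [this]

@[simp] lemma phi_zero (l : List (Fin n)) (a) : phi l 0 a = 1 := by simp [phi]

lemma cntL_perm {l l' : List (Fin n)} (h : l.Perm l') (a) : cntL l a = cntL l' a :=
  (h.filter a).length_eq

lemma phi_perm {l l' : List (Fin n)} (h : l.Perm l') (m : ℕ) (a) : phi l m a = phi l' m a := by
  simp [phi, cntL_perm h]

lemma cntL_update {l : List (Fin n)} {i : Fin n} (hi : i ∉ l) (a) (b : Bool) :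
    cntL l (Function.update a i b) = cntL l a := by
  unfold cntL
  rw [List.filter_congr]
  intro j hj
  rw [Function.update_of_ne (by rintro rfl; exact hi hj)]

lemma phi_update {l : List (Fin n)} {i : Fin n} (hi : i ∉ l) (m) (a) (b : Bool) :
    phi l m (Function.update a i b) = phi l m a := by
  simp [phi, cntL_update hi]

lemma Vpay_update (c : Fin n → ℝ) {l : List (Fin n)} {i : Fin n} (hi : i ∉ l) (m) (a) (b : Bool) :
    Vpay c l m (Function.update a i b) = Vpay c l m a := by
  induction l generalizing m with
  | nil => simp
  | cons j l ih =>
    cases m with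
    | zero => simp
    | succ m =>
      have hji : j ≠ i := by rintro rfl; exact hi List.mem_cons_self
      have hil : i ∉ l := fun h => hi (List.mem_cons_of_mem _ h)
      rw [Vpay_cons, Vpay_cons, Function.update_of_ne hji, ih hil]

lemma Vpay_nonneg (c : Fin n → ℝ) (hc : ∀ i, 0 ≤ c i) (l : List (Fin n)) (m) (a) :
    0 ≤ Vpay c l m a := by
  induction l generalizing m with
  | nil => simp
  | cons j l ih =>
    cases m with
    | zero => simp
    | succ m => rw [Vpay_cons]; have := hc j; have := ih (if a j then m else m+1); positivity

lemma phi_nonneg (l : List (Fin n)) (m) (a) : (0:ℝ) ≤ phi l m a := by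
  unfold phi; positivity

section Prob
variable {n : ℕ} (p : Fin n → ℝ)

lemma pr_nonneg (hp : ∀ i, 0 < p i ∧ p i < 1) (a : Fin n → Bool) : 0 ≤ pr p a := by
  unfold pr
  apply Finset.prod_nonneg
  intro i _
  rcases hp i with ⟨h1, h2⟩
  split <;> linarith

/-- The product over coordinates other than `i`. -/
noncomputable def prR (i : Fin n) (a : Fin n → Bool) : ℝ :=
  ∏ j ∈ Finset.univ.erase i, (if a j then p j else 1 - p j)

lemma pr_eq (i : Fin n) (a : Fin n → Bool) :
    pr p a = (if a i then p i else 1 - p i) * prR p i a := by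
  unfold pr prR
  exact (Finset.mul_prod_erase Finset.univ _ (Finset.mem_univ i)).symm

lemma prR_update (i : Fin n) (a : Fin n → Bool) (b : Bool) :
    prR p i (Function.update a i b) = prR p i a := by
  unfold prR
  apply Finset.prod_congr rfl
  intro j hj
  rw [Function.update_of_ne (Finset.ne_of_mem_erase hj)]

/-- total probability is 1 -/
lemma pr_total : ∑ a : Fin n → Bool, pr p a = 1 := by
  classical
  have h := Finset.prod_univ_sum (κ := fun _ : Fin n => Bool)
      (fun _ => (Finset.univ : Finset Bool)) (fun i b => if b then p i else 1 - p i)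
  rw [Fintype.piFinset_univ] at h
  have h2 : ∀ i : Fin n, (∑ b : Bool, (if b then p i else 1 - p i)) = 1 := by
    intro i; simp
  calc ∑ a : Fin n → Bool, pr p a = ∏ i : Fin n, (∑ b : Bool, (if b then p i else 1 - p i)) := by
        rw [h]; rfl
    _ = 1 := by rw [Finset.prod_congr rfl fun i _ => h2 i]; simp

/-- swap between the two halves -/
lemma sum_halves (i : Fin n) (f : (Fin n → Bool) → ℝ)
    (hf : ∀ a b, f (Function.update a i b) = f a) :
    ∑ a ∈ Finset.univ.filter (fun a : Fin n → Bool => a i = false), f a * prR p i a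
      = ∑ a ∈ Finset.univ.filter (fun a : Fin n → Bool => a i = true), f a * prR p i a := by
  classical
  apply Finset.sum_nbij' (fun a => Function.update a i true) (fun a => Function.update a i false)
  · intro a ha
    simp [Function.update_self]
  · intro a ha
    simp [Function.update_self]
  · intro a ha
    simp only [Finset.mem_filter, Finset.mem_univ, true_and] at ha
    funext j
    by_cases hj : j = i
    · subst hj; simp [Function.update_self, ha]
    · simp [Function.update_of_ne hj]
  · intro a ha
    simp only [Finset.mem_filter, Finset.mem_univ, true_and] at ha
    funext j
    by_cases hj : j = i
    · subst hj; simp [Function.update_self, ha]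
    · simp [Function.update_of_ne hj]
  · intro a ha
    rw [hf, prR_update]

/-- The key conditioning identity. -/
lemma cond_split (i : Fin n) (g1 g0 : (Fin n → Bool) → ℝ)
    (h1 : ∀ a b, g1 (Function.update a i b) = g1 a)
    (h0 : ∀ a b, g0 (Function.update a i b) = g0 a) :
    ∑ a : Fin n → Bool, (if a i then g1 a else g0 a) * pr p a
      = p i * ∑ a : Fin n → Bool, g1 a * pr p a
        + (1 - p i) * ∑ a : Fin n → Bool, g0 a * pr p a := by
  classical
  have key : ∀ g : (Fin n → Bool) → ℝ, (∀ a b, g (Function.update a i b) = g a) →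
      ∑ a : Fin n → Bool, g a * pr p a
        = ∑ a ∈ Finset.univ.filter (fun a : Fin n → Bool => a i = true), g a * prR p i a := by
    intro g hg
    rw [← Finset.sum_filter_add_sum_filter_not Finset.univ (fun a : Fin n → Bool => a i = true)]
    have e1 : ∑ a ∈ Finset.univ.filter (fun a : Fin n → Bool => a i = true), g a * pr p a
        = p i * ∑ a ∈ Finset.univ.filter (fun a : Fin n → Bool => a i = true), g a * prR p i a := by
      rw [Finset.mul_sum]
      apply Finset.sum_congr rfl
      intro a ha
      simp only [Finset.mem_filter] at ha
      rw [pr_eq p i, ha.2]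
      simp; ring
    have e0 : ∑ a ∈ Finset.univ.filter (fun a : Fin n → Bool => ¬ a i = true), g a * pr p a
        = (1 - p i) * ∑ a ∈ Finset.univ.filter (fun a : Fin n → Bool => a i = true),
            g a * prR p i a := by
      have : Finset.univ.filter (fun a : Fin n → Bool => ¬ a i = true)
          = Finset.univ.filter (fun a : Fin n → Bool => a i = false) := by
        apply Finset.filter_congr; intro a _; simp
      rw [this, ← sum_halves p i g hg, Finset.mul_sum]
      apply Finset.sum_congr rfl
      intro a ha
      simp only [Finset.mem_filter] at ha
      rw [pr_eq p i, ha.2]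
      simp; ring
    rw [e1, e0]; ring
  have split : ∑ a : Fin n → Bool, (if a i then g1 a else g0 a) * pr p a
      = ∑ a ∈ Finset.univ.filter (fun a : Fin n → Bool => a i = true), g1 a * pr p a
        + ∑ a ∈ Finset.univ.filter (fun a : Fin n → Bool => ¬ a i = true), g0 a * pr p a := by
    rw [← Finset.sum_filter_add_sum_filter_not Finset.univ (fun a : Fin n → Bool => a i = true)]
    congr 1
    · apply Finset.sum_congr rfl; intro a ha
      simp only [Finset.mem_filter] at ha
      rw [if_pos ha.2]
    · apply Finset.sum_congr rfl; intro a ha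
      simp only [Finset.mem_filter] at ha
      rw [if_neg ha.2]
  have e1g1 : ∑ a ∈ Finset.univ.filter (fun a : Fin n → Bool => a i = true), g1 a * pr p a
      = p i * ∑ a ∈ Finset.univ.filter (fun a : Fin n → Bool => a i = true), g1 a * prR p i a := by
    rw [Finset.mul_sum]
    apply Finset.sum_congr rfl
    intro a ha
    simp only [Finset.mem_filter] at ha
    rw [pr_eq p i, ha.2]
    simp; ring
  have e0g0 : ∑ a ∈ Finset.univ.filter (fun a : Fin n → Bool => ¬ a i = true), g0 a * pr p a
      = (1 - p i) * ∑ a ∈ Finset.univ.filter (fun a : Fin n → Bool => a i = true),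
          g0 a * prR p i a := by
    have : Finset.univ.filter (fun a : Fin n → Bool => ¬ a i = true)
        = Finset.univ.filter (fun a : Fin n → Bool => a i = false) := by
      apply Finset.filter_congr; intro a _; simp
    rw [this, ← sum_halves p i g0 h0, Finset.mul_sum]
    apply Finset.sum_congr rfl
    intro a ha
    simp only [Finset.mem_filter] at ha
    rw [pr_eq p i, ha.2]
    simp; ring
  rw [split, e1g1, e0g0, key g1 h1, key g0 h0]
end Prob
section WP
variable {n : ℕ} (p c : Fin n → ℝ)

noncomputable def Wv (l : List (Fin n)) (m : ℕ) : ℝ :=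
  ∑ a : Fin n → Bool, phi l m a * Vpay c l m a * pr p a

noncomputable def Pv (l : List (Fin n)) (m : ℕ) : ℝ :=
  ∑ a : Fin n → Bool, phi l m a * pr p a

@[simp] lemma Wv_zero (l : List (Fin n)) : Wv p c l 0 = 0 := by
  unfold Wv; simp

@[simp] lemma Pv_zero (l : List (Fin n)) : Pv p l 0 = 1 := by
  unfold Pv; simp [pr_total]

lemma Pv_perm {l l' : List (Fin n)} (h : l.Perm l') (m : ℕ) : Pv p l m = Pv p l' m := by
  unfold Pv
  exact Finset.sum_congr rfl fun a _ => by rw [phi_perm h]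

lemma Pv_cons {i : Fin n} {l : List (Fin n)} (hi : i ∉ l) (m : ℕ) :
    Pv p (i :: l) (m+1) = p i * Pv p l m + (1 - p i) * Pv p l (m+1) := by
  unfold Pv
  rw [← cond_split p i (fun a => phi l m a) (fun a => phi l (m+1) a)
      (fun a b => phi_update hi m a b) (fun a b => phi_update hi (m+1) a b)]
  apply Finset.sum_congr rfl
  intro a _
  rw [phi_cons]

lemma Wv_cons {i : Fin n} {l : List (Fin n)} (hi : i ∉ l) (m : ℕ) :
    Wv p c (i :: l) (m+1)
      = c i * (p i * Pv p l m + (1 - p i) * Pv p l (m+1))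
        + p i * Wv p c l m + (1 - p i) * Wv p c l (m+1) := by
  unfold Wv
  have step : ∀ a : Fin n → Bool,
      phi (i :: l) (m+1) a * Vpay c (i :: l) (m+1) a * pr p a
        = (if a i then phi l m a * (c i + Vpay c l m a)
           else phi l (m+1) a * (c i + Vpay c l (m+1) a)) * pr p a := by
    intro a
    rw [phi_cons, Vpay_cons]
    by_cases h : a i <;> simp [h]
  rw [Finset.sum_congr rfl fun a _ => step a]
  rw [cond_split p i _ _
      (fun a b => by rw [phi_update hi m a b, Vpay_update c hi m a b])
      (fun a b => by rw [phi_update hi (m+1) a b, Vpay_update c hi (m+1) a b])]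
  have exp : ∀ m' : ℕ,
      ∑ a : Fin n → Bool, phi l m' a * (c i + Vpay c l m' a) * pr p a
        = c i * Pv p l m' + Wv p c l m' := by
    intro m'
    unfold Pv Wv
    rw [Finset.mul_sum, ← Finset.sum_add_distrib]
    apply Finset.sum_congr rfl
    intro a _
    ring
  rw [exp m, exp (m+1)]
  simp only [Pv, Wv]
  ring

end WP
section Swap
variable {n : ℕ} (p c : Fin n → ℝ)

lemma swap (hp : ∀ i, 0 < p i ∧ p i < 1)
    {i j : Fin n} {r : List (Fin n)} (hij : i ≠ j) (hi : i ∉ r) (hj : j ∉ r)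
    (hle : c i * p j ≤ c j * p i) (m : ℕ) :
    Wv p c (i :: j :: r) m ≤ Wv p c (j :: i :: r) m := by
  have hijr : i ∉ j :: r := by simp [hij, hi]
  have hjir : j ∉ i :: r := by simp [Ne.symm hij, hj]
  match m with
  | 0 => simp
  | 1 =>
      rw [Wv_cons p c hijr 0, Wv_cons p c hjir 0,
        Wv_cons p c hj 0, Wv_cons p c hi 0,
        Pv_cons p hj 0, Pv_cons p hi 0]
      simp only [Wv_zero, Pv_zero]
      linarith
  | (m+2) =>
      rw [Wv_cons p c hijr (m+1), Wv_cons p c hjir (m+1),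
        Wv_cons p c hj m, Wv_cons p c hi m,
        Wv_cons p c hj (m+1), Wv_cons p c hi (m+1),
        Pv_cons p hj m, Pv_cons p hi m,
        Pv_cons p hj (m+1), Pv_cons p hi (m+1)]
      apply le_of_eq
      ring

lemma key (hp : ∀ i, 0 < p i ∧ p i < 1) (hcp : ∀ i, 0 < c i) :
    ∀ l : List (Fin n), l.Nodup →
      l.Pairwise (fun x y => c x / p x ≤ c y / p y) →
      ∀ i ∈ l, ∀ m, Wv p c l m ≤ Wv p c (i :: l.erase i) m := by
  intro l
  induction l with
  | nil => intro _ _ i hi; exact absurd hi List.not_mem_nil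
  | cons j l2 ih =>
    intro hnd hs i hi m
    rcases List.mem_cons.mp hi with rfl | hi2
    · rw [List.erase_cons_head]
    · have hij : i ≠ j := by rintro rfl; exact (List.nodup_cons.mp hnd).1 hi2
      have hjl2 : j ∉ l2 := (List.nodup_cons.mp hnd).1
      have hnd2 : l2.Nodup := (List.nodup_cons.mp hnd).2
      have hs2 : l2.Pairwise (fun x y => c x / p x ≤ c y / p y) :=
        (List.pairwise_cons.mp hs).2
      have hperm : l2.Perm (i :: l2.erase i) := List.perm_cons_erase hi2
      have hie : i ∉ l2.erase i := fun h => (List.Nodup.mem_erase_iff hnd2).mp h |>.1 rfl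
      have hje : j ∉ l2.erase i := fun h => hjl2 (List.mem_of_mem_erase h)
      have hratio : c j / p j ≤ c i / p i := (List.pairwise_cons.mp hs).1 i hi2
      have hmul : c j * p i ≤ c i * p j := by
        rw [div_le_div_iff₀ (hp j).1 (hp i).1] at hratio
        exact hratio
      cases m with
      | zero => simp
      | succ m =>
        rw [List.erase_cons_tail (by simp [Ne.symm hij])]
        calc Wv p c (j :: l2) (m+1)
            = c j * (p j * Pv p l2 m + (1 - p j) * Pv p l2 (m+1))
              + p j * Wv p c l2 m + (1 - p j) * Wv p c l2 (m+1) := Wv_cons p c hjl2 m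
          _ ≤ c j * (p j * Pv p l2 m + (1 - p j) * Pv p l2 (m+1))
              + p j * Wv p c (i :: l2.erase i) m
              + (1 - p j) * Wv p c (i :: l2.erase i) (m+1) := by
              have h1 := ih hnd2 hs2 i hi2 m
              have h2 := ih hnd2 hs2 i hi2 (m+1)
              have hp1 := (hp j).1
              have hp2 := (hp j).2
              nlinarith
          _ = Wv p c (j :: i :: l2.erase i) (m+1) := by
              rw [Wv_cons p c (by simp [Ne.symm hij, hje] : j ∉ i :: l2.erase i) m,
                Pv_perm p hperm m, Pv_perm p hperm (m+1)]
          _ ≤ Wv p c (i :: j :: l2.erase i) (m+1) :=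
              swap p c hp (Ne.symm hij) hje hie hmul (m+1)

end Swap
section Tree
variable {n : ℕ} (p c : Fin n → ℝ)

lemma tc_update {T : DTree n} {u : Finset (Fin n)} (hT : T.Proper u) {i : Fin n} (hi : i ∈ u)
    (m : ℕ) (a : Fin n → Bool) (b : Bool) :
    tc c T m (Function.update a i b) = tc c T m a := by
  induction T generalizing u m with
  | leaf v => simp
  | node j t0 t1 ih0 ih1 =>
    obtain ⟨hju, h0, h1⟩ := hT
    have hji : j ≠ i := by rintro rfl; exact hju hi
    cases m with
    | zero => simp
    | succ m =>
      rw [tc_node, tc_node, Function.update_of_ne hji]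
      by_cases h : a j <;>
        simp [h, ih1 h1 (Finset.mem_insert_of_mem hi), ih0 h0 (Finset.mem_insert_of_mem hi)]

lemma eval_update {T : DTree n} {u : Finset (Fin n)} (hT : T.Proper u) {i : Fin n} (hi : i ∈ u)
    (a : Fin n → Bool) (b : Bool) :
    T.eval (Function.update a i b) = T.eval a := by
  induction T generalizing u with
  | leaf v => rfl
  | node j t0 t1 ih0 ih1 =>
    obtain ⟨hju, h0, h1⟩ := hT
    have hji : j ≠ i := by rintro rfl; exact hju hi
    show (if _ then _ else _) = _
    rw [Function.update_of_ne hji]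
    by_cases h : a j <;>
      simp [DTree.eval, h, ih1 h1 (Finset.mem_insert_of_mem hi),
        ih0 h0 (Finset.mem_insert_of_mem hi)]

lemma main (hp : ∀ i, 0 < p i ∧ p i < 1) (hcp : ∀ i, 0 < c i) (T : DTree n) :
    ∀ (used : Finset (Fin n)) (l : List (Fin n)) (m : ℕ),
      T.Proper used → (∀ x, x ∈ l ↔ x ∉ used) → l.Nodup →
      l.Pairwise (fun x y => c x / p x ≤ c y / p y) →
      (∀ a, T.eval a = if m ≤ cntL l a then 1 else 0) →
      Wv p c l m ≤ ∑ a : Fin n → Bool, phi l m a * tc c T m a * pr p a := by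
  induction T with
  | leaf v =>
    intro used l m _ hmem hnd hs he
    cases m with
    | zero => simp
    | succ m =>
      have hlen : l.length ≤ m := by
        by_contra hcon
        push_neg at hcon
        have c1 : cntL l (fun _ => true) = l.length := by
          simp [cntL, List.filter_true]
        have c0 : cntL l (fun _ => false) = 0 := by
          simp [cntL, List.filter_false]
        have h1 := he (fun _ => true)
        have h0 := he (fun _ => false)
        rw [c1] at h1
        rw [c0] at h0
        simp only [DTree.eval] at h1 h0
        split_ifs at h1 h0 <;> omega
      have hphi : ∀ a, phi l (m+1) a = 0 := by
        intro a
        have : cntL l a ≤ l.length := List.length_filter_le _ _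
        simp only [phi]
        rw [if_neg (by omega)]
      have : Wv p c l (m+1) = 0 := by
        unfold Wv
        apply Finset.sum_eq_zero
        intro a _
        rw [hphi a]; ring
      rw [this]
      simp
  | node i t0 t1 ih0 ih1 =>
    intro used l m hT hmem hnd hs he
    obtain ⟨hiu, h0, h1⟩ := hT
    cases m with
    | zero => simp
    | succ m =>
      have hil : i ∈ l := (hmem i).mpr hiu
      set l' := l.erase i with hl'
      have hperm : l.Perm (i :: l') := List.perm_cons_erase hil
      have hnd' : l'.Nodup := hnd.erase i
      have hi_l' : i ∉ l' := fun h => ((List.Nodup.mem_erase_iff hnd).mp h).1 rfl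
      have hs' : l'.Pairwise (fun x y => c x / p x ≤ c y / p y) :=
        hs.sublist List.erase_sublist
      have hmem' : ∀ x, x ∈ l' ↔ x ∉ insert i used := by
        intro x
        rw [List.Nodup.mem_erase_iff hnd, hmem x, Finset.mem_insert]
        tauto
      have he1 : ∀ a, t1.eval a = if m ≤ cntL l' a then 1 else 0 := by
        intro a
        have e1 : t1.eval a = t1.eval (Function.update a i true) :=
          (eval_update h1 (Finset.mem_insert_self i used) a true).symm
        have e2 : (DTree.node i t0 t1).eval (Function.update a i true)
            = t1.eval (Function.update a i true) := by
          simp [DTree.eval, Function.update_self]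
        have e3 : cntL l (Function.update a i true) = 1 + cntL l' a := by
          rw [cntL_perm hperm, cntL_cons, Function.update_self, if_pos rfl,
            cntL_update hi_l']
        rw [e1, ← e2, he _, e3]
        congr 1
        simp only [eq_iff_iff]
        omega
      have he0 : ∀ a, t0.eval a = if m + 1 ≤ cntL l' a then 1 else 0 := by
        intro a
        have e1 : t0.eval a = t0.eval (Function.update a i false) :=
          (eval_update h0 (Finset.mem_insert_self i used) a false).symm
        have e2 : (DTree.node i t0 t1).eval (Function.update a i false)
            = t0.eval (Function.update a i false) := by
          simp [DTree.eval, Function.update_self]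
        have e3 : cntL l (Function.update a i false) = cntL l' a := by
          rw [cntL_perm hperm, cntL_cons, Function.update_self, if_neg (by simp),
            cntL_update hi_l']
          omega
        rw [e1, ← e2, he _, e3]
      have ihA := ih1 (insert i used) l' m h1 hmem' hnd' hs' he1
      have ihB := ih0 (insert i used) l' (m+1) h0 hmem' hnd' hs' he0
      -- rewrite RHS via conditioning
      have step : ∀ a : Fin n → Bool,
          phi l (m+1) a * tc c (.node i t0 t1) (m+1) a * pr p a
            = (if a i then phi l' m a * (c i + tc c t1 m a)
               else phi l' (m+1) a * (c i + tc c t0 (m+1) a)) * pr p a := by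
        intro a
        rw [phi_perm hperm, phi_cons, tc_node]
        by_cases h : a i <;> simp [h]
      have rhs_eq : ∑ a : Fin n → Bool, phi l (m+1) a * tc c (.node i t0 t1) (m+1) a * pr p a
          = c i * (p i * Pv p l' m + (1 - p i) * Pv p l' (m+1))
            + p i * (∑ a : Fin n → Bool, phi l' m a * tc c t1 m a * pr p a)
            + (1 - p i) * (∑ a : Fin n → Bool, phi l' (m+1) a * tc c t0 (m+1) a * pr p a) := by
        rw [Finset.sum_congr rfl fun a _ => step a]
        rw [cond_split p i _ _
          (fun a b => by
            rw [phi_update hi_l' m a b,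
              tc_update c h1 (Finset.mem_insert_self i used) m a b])
          (fun a b => by
            rw [phi_update hi_l' (m+1) a b,
              tc_update c h0 (Finset.mem_insert_self i used) (m+1) a b])]
        have exp : ∀ (m' : ℕ) (t : DTree n),
            ∑ a : Fin n → Bool, phi l' m' a * (c i + tc c t m' a) * pr p a
              = c i * Pv p l' m' + ∑ a : Fin n → Bool, phi l' m' a * tc c t m' a * pr p a := by
          intro m' t
          unfold Pv
          rw [Finset.mul_sum, ← Finset.sum_add_distrib]
          apply Finset.sum_congr rfl
          intro a _
          ring
        rw [exp m t1, exp (m+1) t0]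
        ring
      rw [rhs_eq]
      have hkey : Wv p c l (m+1) ≤ Wv p c (i :: l') (m+1) :=
        key p c hp hcp l hnd hs i hil (m+1)
      rw [Wv_cons p c hi_l' m] at hkey
      have hp1 := (hp i).1
      have hp2 := (hp i).2
      nlinarith [ihA, ihB]

end Tree
section Stop
variable {n : ℕ} (c : Fin n → ℝ)

lemma stopCost_zero (sel : Fin n → Bool) (l : List (Fin n)) : stopCost c sel 0 l = 0 := by
  unfold stopCost
  have : sInf {k | 0 ≤ ((l.take k).filter sel).length} = 0 := by
    apply Nat.sInf_eq_zero.mpr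
    left
    simp
  rw [this]
  simp

lemma stopCost_eq_Vpay (sel : Fin n → Bool) :
    ∀ (l : List (Fin n)) (m : ℕ), m ≤ (l.filter sel).length →
      stopCost c sel m l = Vpay c l m sel := by
  intro l
  induction l with
  | nil =>
    intro m hm
    simp at hm
    subst hm
    rw [stopCost_zero]
    simp
  | cons i l' ih =>
    intro m hm
    cases m with
    | zero => rw [stopCost_zero]; simp
    | succ m =>
      have hlen : (List.filter sel (i :: l')).length
          = (if sel i then 1 else 0) + (List.filter sel l').length := by
        rw [List.filter_cons]
        by_cases h : sel i <;> simp [h] <;> omega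
      set m' := if sel i then m else m + 1 with hm'
      have hm'le : m' ≤ (l'.filter sel).length := by
        rw [hlen] at hm
        cases h : sel i
        · simp [hm', h] at hm ⊢; omega
        · simp [hm', h] at hm ⊢; omega
      have hBne : ∃ b, b ∈ {k | m' ≤ ((l'.take k).filter sel).length} :=
        ⟨l'.length, by simpa [List.take_of_length_le (le_refl l'.length)] using hm'le⟩
      set b := sInf {k | m' ≤ ((l'.take k).filter sel).length} with hb
      have hbB : m' ≤ ((l'.take b).filter sel).length := Nat.sInf_mem hBne
      have hiff : ∀ j : ℕ, (m + 1 ≤ (((i :: l').take (j+1)).filter sel).length)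
          ↔ (m' ≤ ((l'.take j).filter sel).length) := by
        intro j
        rw [List.take_succ_cons, List.filter_cons]
        by_cases h : sel i <;> simp [hm', h] <;> omega
      have hA : sInf {k | m + 1 ≤ (((i :: l').take k).filter sel).length} = b + 1 := by
        apply le_antisymm
        · exact Nat.sInf_le ((hiff b).mpr hbB)
        · have hAne : Set.Nonempty {k | m + 1 ≤ (((i :: l').take k).filter sel).length} :=
            ⟨b + 1, (hiff b).mpr hbB⟩
          apply le_csInf hAne
          intro j hj
          match j with
          | 0 => simp [Set.mem_setOf_eq] at hj
          | j+1 =>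
            have : j ∈ {k | m' ≤ ((l'.take k).filter sel).length} := (hiff j).mp hj
            have := Nat.sInf_le this
            omega
      unfold stopCost
      rw [hA, List.take_succ_cons, List.map_cons, List.sum_cons, Vpay_cons]
      congr 1
      rw [← ih m' hm'le]
      rfl

end Stop

section CostCmp
variable {n : ℕ} (c : Fin n → ℝ)

lemma cost_nonneg (hc : ∀ i, 0 ≤ c i) (T : DTree n) (a) : 0 ≤ T.cost c a := by
  induction T with
  | leaf v => simp [DTree.cost]
  | node i t0 t1 ih0 ih1 =>
    show 0 ≤ c i + _
    have := hc i
    by_cases h : a i <;> simp [h] <;> linarith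

lemma tc_le_cost (hc : ∀ i, 0 ≤ c i) (T : DTree n) (m : ℕ) (a) :
    tc c T m a ≤ T.cost c a := by
  induction T generalizing m with
  | leaf v => simp [DTree.cost]
  | node i t0 t1 ih0 ih1 =>
    cases m with
    | zero =>
      rw [tc_zero]
      exact cost_nonneg c hc _ a
    | succ m =>
      rw [tc_node]
      show _ ≤ c i + _
      by_cases h : a i <;> simp [h, DTree.cost] <;> [exact ih1 m; exact ih0 (m+1)]

lemma cntL_eq_N1 {l : List (Fin n)} (hnd : l.Nodup) (hful : ∀ x, x ∈ l) (a : Fin n → Bool) :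
    cntL l a = N1 a := by
  unfold cntL N1
  rw [← List.toFinset_card_of_nodup (hnd.filter a)]
  congr 1
  ext x
  simp only [List.mem_toFinset, List.mem_filter, Finset.mem_filter, Finset.mem_univ, true_and]
  constructor
  · rintro ⟨_, h⟩; exact h
  · intro h; exact ⟨hful x, h⟩

end CostCmp
section OneSide
variable {n : ℕ}

lemma oneSide (p c : Fin n → ℝ)
    (hp : ∀ i, 0 < p i ∧ p i < 1) (hc : ∀ i, 0 < c i)
    (k : ℕ) (σl : List (Fin n)) (hnd : σl.Nodup) (hful : ∀ x, x ∈ σl)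
    (hσ : σl.Pairwise (fun i j => c i / p i ≤ c j / p j))
    (T : DTree n) (hTp : T.Proper ∅)
    (hTe : ∀ a, T.eval a = if k ≤ N1 a then 1 else 0) :
    ∑ a ∈ Finset.univ.filter (fun a : Fin n → Bool => k ≤ N1 a),
        stopCost c a k σl * pr p a
      ≤ ∑ a ∈ Finset.univ.filter (fun a : Fin n → Bool => k ≤ N1 a),
          T.cost c a * pr p a := by
  classical
  have hcnt : ∀ a : Fin n → Bool, cntL σl a = N1 a := cntL_eq_N1 hnd hful
  have hc' : ∀ i, 0 ≤ c i := fun i => (hc i).le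
  -- step 1 : stopCost = phi * Vpay on the filter
  have s1 : ∑ a ∈ Finset.univ.filter (fun a : Fin n → Bool => k ≤ N1 a),
      stopCost c a k σl * pr p a
      = ∑ a ∈ Finset.univ.filter (fun a : Fin n → Bool => k ≤ N1 a),
          phi σl k a * Vpay c σl k a * pr p a := by
    apply Finset.sum_congr rfl
    intro a ha
    simp only [Finset.mem_filter, Finset.mem_univ, true_and] at ha
    have hflt : k ≤ (σl.filter a).length := by
      have : (σl.filter a).length = cntL σl a := rfl
      rw [this, hcnt a]; exact ha
    rw [stopCost_eq_Vpay c a σl k hflt]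
    have : phi σl k a = 1 := by
      simp only [phi]
      rw [if_pos (by rw [hcnt a]; exact ha)]
    rw [this, one_mul]
  -- step 2 : extend to the full sum
  have s2 : ∑ a ∈ Finset.univ.filter (fun a : Fin n → Bool => k ≤ N1 a),
      phi σl k a * Vpay c σl k a * pr p a ≤ Wv p c σl k := by
    unfold Wv
    apply Finset.sum_le_sum_of_subset_of_nonneg (Finset.filter_subset _ _)
    intro a _ _
    have := phi_nonneg σl k a
    have := Vpay_nonneg c hc' σl k a
    have := pr_nonneg p hp a
    positivity
  -- step 3 : main inequality
  have s3 : Wv p c σl k ≤ ∑ a : Fin n → Bool, phi σl k a * tc c T k a * pr p a := by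
    apply main p c hp hc T ∅ σl k hTp (by simp [hful]) hnd hσ
    intro a
    rw [hTe a, hcnt a]
  -- step 4 : back to the filter
  have s4 : ∑ a : Fin n → Bool, phi σl k a * tc c T k a * pr p a
      = ∑ a ∈ Finset.univ.filter (fun a : Fin n → Bool => k ≤ N1 a),
          tc c T k a * pr p a := by
    rw [← Finset.sum_filter_add_sum_filter_not Finset.univ
      (fun a : Fin n → Bool => k ≤ N1 a)
      (fun a => phi σl k a * tc c T k a * pr p a)]
    have z : ∑ a ∈ Finset.univ.filter (fun a : Fin n → Bool => ¬ k ≤ N1 a),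
        phi σl k a * tc c T k a * pr p a = 0 := by
      apply Finset.sum_eq_zero
      intro a ha
      simp only [Finset.mem_filter, Finset.mem_univ, true_and] at ha
      have : phi σl k a = 0 := by
        simp only [phi]
        rw [if_neg (by rw [hcnt a]; exact ha)]
      rw [this]; ring
    rw [z, add_zero]
    apply Finset.sum_congr rfl
    intro a ha
    simp only [Finset.mem_filter, Finset.mem_univ, true_and] at ha
    have : phi σl k a = 1 := by
      simp only [phi]
      rw [if_pos (by rw [hcnt a]; exact ha)]
    rw [this, one_mul]
  -- step 5 : tc ≤ cost
  have s5 : ∑ a ∈ Finset.univ.filter (fun a : Fin n → Bool => k ≤ N1 a),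
      tc c T k a * pr p a
      ≤ ∑ a ∈ Finset.univ.filter (fun a : Fin n → Bool => k ≤ N1 a),
          T.cost c a * pr p a := by
    apply Finset.sum_le_sum
    intro a _
    exact mul_le_mul_of_nonneg_right (tc_le_cost c hc' T k a) (pr_nonneg p hp a)
  calc _ = _ := s1
    _ ≤ _ := s2
    _ ≤ _ := s3
    _ = _ := s4
    _ ≤ _ := s5

/-- Flip a tree : swap children everywhere and complement leaf labels. -/
def flip : DTree n → DTree n
  | .leaf v => .leaf (1 - v)
  | .node i t0 t1 => .node i (flip t1) (flip t0)

lemma flip_proper {T : DTree n} {u : Finset (Fin n)} (h : T.Proper u) : (flip T).Proper u := by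
  induction T generalizing u with
  | leaf v => trivial
  | node i t0 t1 ih0 ih1 =>
    obtain ⟨h1, h2, h3⟩ := h
    exact ⟨h1, ih1 h3, ih0 h2⟩

lemma flip_cost (c : Fin n → ℝ) (T : DTree n) (a : Fin n → Bool) :
    (flip T).cost c a = T.cost c (fun i => !a i) := by
  induction T with
  | leaf v => rfl
  | node i t0 t1 ih0 ih1 =>
    show c i + _ = c i + _
    by_cases h : a i <;> simp [DTree.cost, h, ih0, ih1]

lemma flip_eval (T : DTree n) (a : Fin n → Bool) :
    (flip T).eval a = 1 - T.eval (fun i => !a i) := by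
  induction T with
  | leaf v => rfl
  | node i t0 t1 ih0 ih1 =>
    show (if a i then _ else _) = _
    by_cases h : a i <;> simp [DTree.eval, h, ih0, ih1]

lemma N1_not (a : Fin n → Bool) : N1 (fun i => !a i) = n - N1 a := by
  unfold N1
  have : Finset.univ.filter (fun i => (!a i) = true)
      = (Finset.univ.filter (fun i => a i = true))ᶜ := by
    ext i; simp
  rw [this, Finset.card_compl]
  simp

lemma N1_le (a : Fin n → Bool) : N1 a ≤ n := by
  unfold N1
  simpa using Finset.card_filter_le Finset.univ (fun i => a i = true)

end OneSide
lemma pr_flip {n : ℕ} (p : Fin n → ℝ) (b : Fin n → Bool) :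
    pr (fun i => 1 - p i) b = pr p (fun i => !b i) := by
  unfold pr
  apply Finset.prod_congr rfl
  intro i _
  cases h : b i <;> simp [h] <;> ring

end Aux

theorem stmt18 {n : ℕ} (hn : 1 ≤ n) (p c : Fin n → ℝ)
    (hp : ∀ i, 0 < p i ∧ p i < 1) (hc : ∀ i, 0 < c i)
    (k : ℕ) (hk1 : 1 ≤ k) (hkn : k ≤ n)
    (σ σ' : Equiv.Perm (Fin n))
    (hσ : (List.ofFn (fun t => σ t)).Pairwise
      (fun i j => c i / p i ≤ c j / p j))
    (hσ' : (List.ofFn (fun t => σ' t)).Pairwise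
      (fun i j => c i / (1 - p i) ≤ c j / (1 - p j)))
    (T : DTree n) (hTp : T.Proper ∅)
    (hTe : ∀ a, T.eval a = if k ≤ N1 a then 1 else 0) :
    (∑ a ∈ Finset.univ.filter (fun a : Fin n → Bool => k ≤ N1 a),
        stopCost c a k (List.ofFn (fun t => σ t)) * pr p a
      ≤ ∑ a ∈ Finset.univ.filter (fun a : Fin n → Bool => k ≤ N1 a),
          T.cost c a * pr p a) ∧
    (∑ a ∈ Finset.univ.filter (fun a : Fin n → Bool => ¬ k ≤ N1 a),
        stopCost c (fun i => !a i) (n - k + 1) (List.ofFn (fun t => σ' t)) * pr p a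
      ≤ ∑ a ∈ Finset.univ.filter (fun a : Fin n → Bool => ¬ k ≤ N1 a),
          T.cost c a * pr p a) := by
  classical
  constructor
  · exact Aux.oneSide p c hp hc k (List.ofFn (fun t => σ t))
      (List.nodup_ofFn.mpr σ.injective)
      (fun x => List.mem_ofFn.mpr ⟨σ.symm x, by simp⟩)
      hσ T hTp hTe
  · set p' : Fin n → ℝ := fun i => 1 - p i with hp'def
    have hp' : ∀ i, 0 < p' i ∧ p' i < 1 := by
      intro i
      rcases hp i with ⟨h1, h2⟩
      constructor <;> simp [hp'def] <;> linarith
    set k' := n - k + 1 with hk'def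
    set σl' := List.ofFn (fun t => σ' t) with hσl'def
    have hTe' : ∀ a, (Aux.flip T).eval a = if k' ≤ N1 a then 1 else 0 := by
      intro a
      rw [Aux.flip_eval, hTe]
      have h1 := Aux.N1_le a
      have h2 := Aux.N1_le (fun i => !a i)
      rw [Aux.N1_not]
      by_cases h : k ≤ n - N1 a
      · rw [if_pos h, if_neg (by omega)]
      · rw [if_neg h, if_pos (by omega)]
    have main2 := Aux.oneSide p' c hp' hc k' σl'
      (List.nodup_ofFn.mpr σ'.injective)
      (fun x => List.mem_ofFn.mpr ⟨σ'.symm x, by simp⟩)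
      hσ' (Aux.flip T) (Aux.flip_proper hTp) hTe'
    have hmapmem : ∀ b : Fin n → Bool, k' ≤ N1 b → ¬ k ≤ N1 (fun i => !b i) := by
      intro b hb
      rw [Aux.N1_not]
      have := Aux.N1_le b
      omega
    have hmapmem' : ∀ a : Fin n → Bool, ¬ k ≤ N1 a → k' ≤ N1 (fun i => !a i) := by
      intro a ha
      rw [Aux.N1_not]
      have := Aux.N1_le a
      omega
    have hinv : ∀ b : Fin n → Bool, (fun i => !(!b i)) = b := by
      intro b; funext i; simp
    have eqL : ∑ b ∈ Finset.univ.filter (fun b : Fin n → Bool => k' ≤ N1 b),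
        stopCost c b k' σl' * pr p' b
        = ∑ a ∈ Finset.univ.filter (fun a : Fin n → Bool => ¬ k ≤ N1 a),
            stopCost c (fun i => !a i) k' σl' * pr p a := by
      apply Finset.sum_nbij' (fun b => fun i => !b i) (fun a => fun i => !a i)
      · intro b hb
        simp only [Finset.mem_filter, Finset.mem_univ, true_and] at hb ⊢
        exact hmapmem b hb
      · intro a ha
        simp only [Finset.mem_filter, Finset.mem_univ, true_and] at ha ⊢
        exact hmapmem' a ha
      · intro b _; exact hinv b
      · intro a _; exact hinv a
      · intro b _
        rw [hinv b, Aux.pr_flip p b]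
    have eqR : ∑ b ∈ Finset.univ.filter (fun b : Fin n → Bool => k' ≤ N1 b),
        (Aux.flip T).cost c b * pr p' b
        = ∑ a ∈ Finset.univ.filter (fun a : Fin n → Bool => ¬ k ≤ N1 a),
            T.cost c a * pr p a := by
      apply Finset.sum_nbij' (fun b => fun i => !b i) (fun a => fun i => !a i)
      · intro b hb
        simp only [Finset.mem_filter, Finset.mem_univ, true_and] at hb ⊢
        exact hmapmem b hb
      · intro a ha
        simp only [Finset.mem_filter, Finset.mem_univ, true_and] at ha ⊢
        exact hmapmem' a ha
      · intro b _; exact hinv b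
      · intro a _; exact hinv a
      · intro b _
        rw [Aux.flip_cost, Aux.pr_flip p b]
    rw [eqL, eqR] at main2
    exact main2
end

section
/- For arbitrary positive costs c, let 1 ≤ k ≤ n and let f_k be the k-of-n function, f_k(a) = 1 iff N₁(a) ≥ k. Then OPT(f_k) = V(f_k): the minimum expected evaluation cost of f_k over all decision trees equals its optimal expected verification cost, i.e., the sum of the minimum 1-cost and the minimum 0-cost over decision trees evaluating f_k. -/
open Finset

/-- Expected-cost-minimizing value over all decision trees evaluating `h`. -/
noncomputable def OPTcost {n : ℕ} (p c : Fin n → ℝ) (h : (Fin n → Bool) → ℕ) : ℝ :=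
  sInf {x : ℝ | ∃ T : DTree n, T.Proper ∅ ∧ (∀ a, T.eval a = h a) ∧
    x = ∑ a : Fin n → Bool, T.cost c a * pr p a}

namespace KofN

open Finset DTree

variable {n : ℕ}

/-- probability of value `b` at coordinate `i`. -/
noncomputable def q (p : Fin n → ℝ) (b : Bool) (i : Fin n) : ℝ :=
  if b then p i else 1 - p i

lemma q_not (p : Fin n → ℝ) (b : Bool) (i : Fin n) : q p (!b) i = 1 - q p b i := by
  cases b <;> simp [q]

lemma q_pos {p : Fin n → ℝ} (hp : ∀ i, 0 < p i ∧ p i < 1) (b : Bool) (i : Fin n) :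
    0 < q p b i := by
  cases b <;> simp [q] <;> [linarith [(hp i).2]; exact (hp i).1]

lemma q_lt_one {p : Fin n → ℝ} (hp : ∀ i, 0 < p i ∧ p i < 1) (b : Bool) (i : Fin n) :
    q p b i < 1 := by
  cases b <;> simp [q] <;> [linarith [(hp i).1]; exact (hp i).2]

/-- number of coordinates of `S` where `a` takes value `b`. -/
def Nb (b : Bool) (S : Finset (Fin n)) (a : Fin n → Bool) : ℕ :=
  (S.filter (fun i => a i = b)).card

lemma Nb_le_card (b : Bool) (S : Finset (Fin n)) (a : Fin n → Bool) :
    Nb b S a ≤ S.card := card_filter_le _ _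

lemma Nb_erase {i : Fin n} {S : Finset (Fin n)} (hi : i ∈ S) (b : Bool) (a : Fin n → Bool) :
    Nb b S a = Nb b (S.erase i) a + (if a i = b then 1 else 0) := by
  unfold Nb
  rw [Finset.filter_erase]
  by_cases h : a i = b
  · simp only [h, if_pos]
    rw [Finset.card_erase_of_mem (by simp [hi, h])]
    have : 0 < (S.filter (fun j => a j = b)).card := Finset.card_pos.2 ⟨i, by simp [hi, h]⟩
    omega
  · simp only [h, if_neg, if_false]
    rw [Finset.erase_eq_of_notMem (by simp [h])]
    omega

lemma Nb_update_of_not_mem {i : Fin n} {S : Finset (Fin n)} (hi : i ∉ S) (b v : Bool)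
    (a : Fin n → Bool) : Nb b S (Function.update a i v) = Nb b S a := by
  unfold Nb
  congr 1
  apply Finset.filter_congr
  intro j hj
  have : j ≠ i := fun h => hi (h ▸ hj)
  simp [Function.update_of_ne this]

lemma Nb_true_add_false (S : Finset (Fin n)) (a : Fin n → Bool) :
    Nb true S a + Nb false S a = S.card := by
  unfold Nb
  have h := Finset.card_filter_add_card_filter_not (s := S) (p := fun i => a i = true)
  have h2 : S.filter (fun i => a i = false) = S.filter (fun i => ¬ a i = true) := by
    apply Finset.filter_congr
    intro j _
    simp
  rw [h2]
  exact h

/-- product of the probability weights over coordinates other than `i`. -/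
noncomputable def prOff (p : Fin n → ℝ) (i : Fin n) (a : Fin n → Bool) : ℝ :=
  ∏ j ∈ Finset.univ.erase i, q p (a j) j

lemma pr_eq_q_mul_prOff (p : Fin n → ℝ) (i : Fin n) (a : Fin n → Bool) :
    pr p a = q p (a i) i * prOff p i a := by
  unfold pr prOff
  rw [← Finset.mul_prod_erase _ _ (Finset.mem_univ i)]
  congr 1

lemma prOff_update (p : Fin n → ℝ) (i : Fin n) (a : Fin n → Bool) (v : Bool) :
    prOff p i (Function.update a i v) = prOff p i a := by
  unfold prOff
  apply Finset.prod_congr rfl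
  intro j hj
  rw [Function.update_of_ne (Finset.ne_of_mem_erase hj)]

lemma prOff_nonneg {p : Fin n → ℝ} (hp : ∀ i, 0 < p i ∧ p i < 1) (i : Fin n)
    (a : Fin n → Bool) : 0 ≤ prOff p i a :=
  Finset.prod_nonneg fun j _ => (q_pos hp _ j).le

lemma pr_nonneg {p : Fin n → ℝ} (hp : ∀ i, 0 < p i ∧ p i < 1) (a : Fin n → Bool) :
    0 ≤ pr p a :=
  Finset.prod_nonneg fun j _ => by
    by_cases h : a j <;> simp [h]
    · exact (hp j).1.le
    · linarith [(hp j).2]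

end KofN
namespace KofN

open Finset DTree

variable {n : ℕ}

lemma eval_update {T : DTree n} {U : Finset (Fin n)} (hT : T.Proper U) {i : Fin n}
    (hi : i ∈ U) (a : Fin n → Bool) (v : Bool) :
    T.eval (Function.update a i v) = T.eval a := by
  induction T generalizing U with
  | leaf w => rfl
  | node j t0 t1 ih0 ih1 =>
    obtain ⟨hj, h0, h1⟩ := hT
    have hne : j ≠ i := fun h => hj (h ▸ hi)
    simp only [DTree.eval, Function.update_of_ne hne]
    by_cases h : a j <;> simp only [h, if_true, if_false]
    · exact ih1 h1 (Finset.mem_insert_of_mem hi)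
    · exact ih0 h0 (Finset.mem_insert_of_mem hi)

lemma cost_update {c : Fin n → ℝ} {T : DTree n} {U : Finset (Fin n)} (hT : T.Proper U)
    {i : Fin n} (hi : i ∈ U) (a : Fin n → Bool) (v : Bool) :
    T.cost c (Function.update a i v) = T.cost c a := by
  induction T generalizing U with
  | leaf w => rfl
  | node j t0 t1 ih0 ih1 =>
    obtain ⟨hj, h0, h1⟩ := hT
    have hne : j ≠ i := fun h => hj (h ▸ hi)
    simp only [DTree.cost, Function.update_of_ne hne]
    by_cases h : a j <;> simp only [h, if_true, Bool.false_eq_true, if_false]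
    · rw [ih1 h1 (Finset.mem_insert_of_mem hi)]
    · rw [ih0 h0 (Finset.mem_insert_of_mem hi)]

lemma cost_nonneg {c : Fin n → ℝ} (hc : ∀ i, 0 < c i) (T : DTree n) (a : Fin n → Bool) :
    0 ≤ T.cost c a := by
  induction T with
  | leaf w => exact le_refl 0
  | node j t0 t1 ih0 ih1 =>
    simp only [DTree.cost]
    have : 0 ≤ if a j then t1.cost c a else t0.cost c a := by
      by_cases h : a j <;> simp [h, ih0, ih1]
    linarith [(hc j).le]

/-- Marginalization: if `G` does not depend on coordinate `i`, then summing
`G · prOff` over either half-space equals the full expectation of `G`. -/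
lemma marg {p : Fin n → ℝ} (i : Fin n) (b₀ : Bool) (G : (Fin n → Bool) → ℝ)
    (hG : ∀ a v, G (Function.update a i v) = G a) :
    ∑ a ∈ Finset.univ.filter (fun a => a i = b₀), G a * prOff p i a
      = ∑ a : Fin n → Bool, G a * pr p a := by
  have key : ∀ b₁ b₂ : Bool,
      ∑ a ∈ Finset.univ.filter (fun a => a i = b₁), G a * prOff p i a
        = ∑ a ∈ Finset.univ.filter (fun a => a i = b₂), G a * prOff p i a := by
    intro b₁ b₂
    refine Finset.sum_bij' (fun a _ => Function.update a i b₂)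
      (fun a _ => Function.update a i b₁) ?_ ?_ ?_ ?_ ?_
    · intro a ha
      simp
    · intro a ha
      simp
    · intro a ha
      simp only [Finset.mem_filter, Finset.mem_univ, true_and] at ha ⊢
      funext j
      by_cases h : j = i
      · subst h; simp [ha]
      · simp [Function.update_of_ne h]
    · intro a ha
      simp only [Finset.mem_filter, Finset.mem_univ, true_and] at ha ⊢
      funext j
      by_cases h : j = i
      · subst h; simp [ha]
      · simp [Function.update_of_ne h]
    · intro a ha
      rw [hG, prOff_update]
  have split : ∑ a : Fin n → Bool, G a * pr p a
      = ∑ a ∈ Finset.univ.filter (fun a => a i = true), G a * pr p a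
        + ∑ a ∈ Finset.univ.filter (fun a => ¬ a i = true), G a * pr p a := by
    rw [Finset.sum_filter_add_sum_filter_not]
  have hf : Finset.univ.filter (fun a : Fin n → Bool => ¬ a i = true)
      = Finset.univ.filter (fun a => a i = false) := by
    apply Finset.filter_congr; intro a _; simp
  rw [split, hf]
  have e1 : ∀ b₁ : Bool, ∑ a ∈ Finset.univ.filter (fun a => a i = b₁), G a * pr p a
      = q p b₁ i * ∑ a ∈ Finset.univ.filter (fun a => a i = b₁), G a * prOff p i a := by
    intro b₁
    rw [Finset.mul_sum]
    apply Finset.sum_congr rfl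
    intro a ha
    simp only [Finset.mem_filter, Finset.mem_univ, true_and] at ha
    rw [pr_eq_q_mul_prOff p i a, ha]
    ring
  rw [e1 true, e1 false, key false b₀, key true b₀, ← add_mul]
  have : q p true i + q p false i = 1 := by simp [q]
  rw [this, one_mul]

end KofN
namespace KofN

open Finset DTree

variable {n : ℕ}

/-- Expected value of `f` restricted to assignments with at least `κ` coordinates
equal to `b` within `S`. -/
noncomputable def Gsum (p : Fin n → ℝ) (b : Bool) (S : Finset (Fin n)) (κ : ℕ)
    (f : (Fin n → Bool) → ℝ) : ℝ :=
  ∑ a ∈ Finset.univ.filter (fun a => κ ≤ Nb b S a), f a * pr p a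

noncomputable def P (p : Fin n → ℝ) (b : Bool) (S : Finset (Fin n)) (κ : ℕ) : ℝ :=
  Gsum p b S κ (fun _ => 1)

lemma Gsum_nonneg {p : Fin n → ℝ} (hp : ∀ i, 0 < p i ∧ p i < 1) {b S κ}
    {f : (Fin n → Bool) → ℝ} (hf : ∀ a, 0 ≤ f a) : 0 ≤ Gsum p b S κ f :=
  Finset.sum_nonneg fun a _ => mul_nonneg (hf a) (pr_nonneg hp a)

lemma P_nonneg {p : Fin n → ℝ} (hp : ∀ i, 0 < p i ∧ p i < 1) (b S κ) :
    0 ≤ P p b S κ := Gsum_nonneg hp fun _ => zero_le_one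

lemma P_zero (p : Fin n → ℝ) (b : Bool) (S : Finset (Fin n)) :
    P p b S 0 = 1 := by
  unfold P Gsum
  have h1 : Finset.univ.filter (fun a : Fin n → Bool => 0 ≤ Nb b S a) = Finset.univ := by
    apply Finset.filter_true_of_mem; intro a _; exact Nat.zero_le _
  rw [h1]
  simp only [one_mul]
  unfold pr
  rw [← Fintype.prod_sum (f := fun (i : Fin n) (b : Bool) => if b then p i else 1 - p i)]
  apply Finset.prod_eq_one
  intro i _
  simp

lemma P_eq_zero_of_card_lt (p : Fin n → ℝ) (b : Bool) {S : Finset (Fin n)} {κ : ℕ}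
    (h : S.card < κ) : P p b S κ = 0 := by
  unfold P Gsum
  rw [Finset.filter_false_of_mem, Finset.sum_empty]
  intro a _
  have := Nb_le_card b S a
  omega

/-- The main decomposition of a conditional expectation at a pivot coordinate `i`. -/
lemma Gsum_split {p : Fin n → ℝ} {i : Fin n} {S : Finset (Fin n)} (hi : i ∈ S)
    (b : Bool) {κ : ℕ} (hκ : 1 ≤ κ) (fw fo : (Fin n → Bool) → ℝ)
    (hfw : ∀ a v, fw (Function.update a i v) = fw a)
    (hfo : ∀ a v, fo (Function.update a i v) = fo a) :
    Gsum p b S κ (fun a => if a i = b then fw a else fo a)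
      = q p b i * Gsum p b (S.erase i) (κ - 1) fw
        + (1 - q p b i) * Gsum p b (S.erase i) κ fo := by
  unfold Gsum
  rw [← Finset.sum_filter_add_sum_filter_not (Finset.univ.filter fun a => κ ≤ Nb b S a)
    (fun a => a i = b)]
  have key : ∀ (b₁ : Bool) (κ' : ℕ) (f : (Fin n → Bool) → ℝ)
      (hf : ∀ a v, f (Function.update a i v) = f a)
      (hcond : ∀ a : Fin n → Bool, a i = b₁ → (κ ≤ Nb b S a ↔ κ' ≤ Nb b (S.erase i) a)),
      ∑ a ∈ (Finset.univ.filter fun a => κ ≤ Nb b S a).filter (fun a => a i = b₁),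
          (if a i = b then fw a else fo a) * pr p a
        = ∑ a ∈ (Finset.univ.filter fun a => κ ≤ Nb b S a).filter (fun a => a i = b₁),
          f a * pr p a →
      ∑ a ∈ (Finset.univ.filter fun a => κ ≤ Nb b S a).filter (fun a => a i = b₁),
          (if a i = b then fw a else fo a) * pr p a
        = q p b₁ i * Gsum p b (S.erase i) κ' f := by
    intro b₁ κ' f hf hcond hval
    rw [hval]
    rw [Finset.filter_filter]
    have hset : Finset.univ.filter (fun a => κ ≤ Nb b S a ∧ a i = b₁)
        = (Finset.univ.filter fun a : Fin n → Bool => a i = b₁).filter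
            (fun a => κ' ≤ Nb b (S.erase i) a) := by
      rw [Finset.filter_filter]
      apply Finset.filter_congr
      intro a _
      constructor
      · rintro ⟨h1, h2⟩; exact ⟨h2, (hcond a h2).1 h1⟩
      · rintro ⟨h2, h1⟩; exact ⟨(hcond a h2).2 h1, h2⟩
    rw [hset]
    have hstep : ∑ a ∈ (Finset.univ.filter fun a : Fin n → Bool => a i = b₁).filter
          (fun a => κ' ≤ Nb b (S.erase i) a), f a * pr p a
        = q p b₁ i * ∑ a ∈ Finset.univ.filter (fun a : Fin n → Bool => a i = b₁),
            (if κ' ≤ Nb b (S.erase i) a then f a else 0) * prOff p i a := by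
      rw [Finset.sum_filter, Finset.mul_sum]
      apply Finset.sum_congr rfl
      intro a ha
      simp only [Finset.mem_filter, Finset.mem_univ, true_and] at ha
      rw [pr_eq_q_mul_prOff p i a, ha]
      by_cases h : κ' ≤ Nb b (S.erase i) a <;> simp [h] <;> ring
    rw [hstep, marg i b₁ _ (by
      intro a v
      have hni : i ∉ S.erase i := Finset.notMem_erase i S
      rw [Nb_update_of_not_mem hni, hf])]
    unfold Gsum
    rw [Finset.sum_filter]
    congr 1
    apply Finset.sum_congr rfl
    intro a _
    by_cases h : κ' ≤ Nb b (S.erase i) a <;> simp [h]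
  have h1 := key b (κ - 1) fw hfw (by
    intro a hab
    have := Nb_erase hi b a
    rw [if_pos hab] at this
    omega) (Finset.sum_congr rfl (by intro a ha; simp only [Finset.mem_filter] at ha
                                     rw [if_pos ha.2]))
  have h2 := key (!b) κ fo hfo (by
    intro a hab
    have := Nb_erase hi b a
    rw [if_neg (by simp [hab])] at this
    omega) ?_
  · have hfneg : (Finset.univ.filter fun a => κ ≤ Nb b S a).filter (fun a => ¬ a i = b)
        = (Finset.univ.filter fun a => κ ≤ Nb b S a).filter (fun a => a i = !b) := by
      apply Finset.filter_congr
      intro a _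
      cases hab : a i <;> cases b <;> simp
    rw [hfneg]
    rw [h1, h2, q_not]
    unfold Gsum
    rfl
  · apply Finset.sum_congr rfl
    intro a ha
    simp only [Finset.mem_filter] at ha
    rw [if_neg (by simp [ha.2])]

lemma P_rec (p : Fin n → ℝ) {i : Fin n} {S : Finset (Fin n)} (hi : i ∈ S) (b : Bool)
    {κ : ℕ} (hκ : 1 ≤ κ) :
    P p b S κ = q p b i * P p b (S.erase i) (κ - 1) + (1 - q p b i) * P p b (S.erase i) κ := by
  have := Gsum_split (p := p) hi b hκ (fun _ => (1:ℝ)) (fun _ => (1:ℝ))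
    (fun _ _ => rfl) (fun _ _ => rfl)
  simpa [P] using this

/-- Decomposition of the restricted expected cost of a node. -/
lemma cost_split {p c : Fin n → ℝ} {i : Fin n} {S : Finset (Fin n)} (hi : i ∈ S)
    (b : Bool) {κ : ℕ} (hκ : 1 ≤ κ) (t0 t1 : DTree n)
    (h0 : t0.Proper (S.erase i)ᶜ) (h1 : t1.Proper (S.erase i)ᶜ) :
    Gsum p b S κ (fun a => (DTree.node i t0 t1).cost c a)
      = c i * P p b S κ
        + q p b i * Gsum p b (S.erase i) (κ - 1)
            (fun a => (if b then t1 else t0).cost c a)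
        + (1 - q p b i) * Gsum p b (S.erase i) κ
            (fun a => (if b then t0 else t1).cost c a) := by
  have hic : i ∈ (S.erase i)ᶜ := by simp
  have hsplit : ∀ a : Fin n → Bool, (DTree.node i t0 t1).cost c a
      = c i + (if a i = b then (if b then t1 else t0).cost c a
               else (if b then t0 else t1).cost c a) := by
    intro a
    cases b <;> cases hab : a i <;> simp [DTree.cost, hab]
  have e1 : Gsum p b S κ (fun a => (DTree.node i t0 t1).cost c a)
      = Gsum p b S κ (fun _ => c i)
        + Gsum p b S κ (fun a => if a i = b then (if b then t1 else t0).cost c a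
            else (if b then t0 else t1).cost c a) := by
    unfold Gsum
    rw [← Finset.sum_add_distrib]
    apply Finset.sum_congr rfl
    intro a _
    simp only [hsplit]
    ring
  rw [e1]
  have e2 : Gsum p b S κ (fun _ => c i) = c i * P p b S κ := by
    unfold Gsum P Gsum
    rw [Finset.mul_sum]
    apply Finset.sum_congr rfl
    intro a _
    ring
  have hw : (if b then t1 else t0).Proper (S.erase i)ᶜ := by
    cases b
    · simpa using h0
    · simpa using h1
  have ho : (if b then t0 else t1).Proper (S.erase i)ᶜ := by
    cases b
    · simpa using h1
    · simpa using h0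
  rw [e2, Gsum_split hi b hκ _ _
    (fun a v => cost_update hw hic a v)
    (fun a v => cost_update ho hic a v)]
  ring

end KofN
namespace KofN

open Finset DTree

variable {n : ℕ}

/-- Sorting key: cost/probability ratio, with index as tiebreaker. -/
noncomputable def sig (p c : Fin n → ℝ) (b : Bool) (i : Fin n) : ℝ ×ₗ Fin n :=
  toLex (c i / q p b i, i)

lemma sig_injective (p c : Fin n → ℝ) (b : Bool) : Function.Injective (sig p c b) := by
  intro i j h
  unfold sig at h
  have := congrArg (fun x => (ofLex x).2) h
  simpa using this

/-- The element of `S` with minimal key. -/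
noncomputable def argmin (p c : Fin n → ℝ) (b : Bool) (S : Finset (Fin n))
    (hS : S.Nonempty) : Fin n :=
  (Finset.exists_min_image S (sig p c b) hS).choose

lemma argmin_mem (p c : Fin n → ℝ) (b : Bool) (S : Finset (Fin n)) (hS : S.Nonempty) :
    argmin p c b S hS ∈ S :=
  (Finset.exists_min_image S (sig p c b) hS).choose_spec.1

lemma argmin_min (p c : Fin n → ℝ) (b : Bool) (S : Finset (Fin n)) (hS : S.Nonempty)
    {j : Fin n} (hj : j ∈ S) : sig p c b (argmin p c b S hS) ≤ sig p c b j :=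
  (Finset.exists_min_image S (sig p c b) hS).choose_spec.2 j hj

lemma argmin_eq (p c : Fin n → ℝ) (b : Bool) {S : Finset (Fin n)} (hS : S.Nonempty)
    {i : Fin n} (hi : i ∈ S) (hmin : ∀ j ∈ S, sig p c b i ≤ sig p c b j) :
    i = argmin p c b S hS := by
  apply sig_injective p c b
  exact le_antisymm (hmin _ (argmin_mem p c b S hS)) (argmin_min p c b S hS hi)

lemma argmin_erase (p c : Fin n → ℝ) (b : Bool) {S : Finset (Fin n)} (hS : S.Nonempty)
    {i : Fin n} (hi : i ∈ S) (hne : i ≠ argmin p c b S hS) (h' : (S.erase i).Nonempty) :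
    argmin p c b (S.erase i) h' = argmin p c b S hS := by
  symm
  apply argmin_eq
  · exact Finset.mem_erase.2 ⟨Ne.symm hne, argmin_mem p c b S hS⟩
  · intro j hj
    exact argmin_min p c b S hS (Finset.mem_of_mem_erase hj)

/-- ratio comparison from key comparison -/
lemma ratio_le_of_sig_le {p c : Fin n → ℝ} (hp : ∀ i, 0 < p i ∧ p i < 1) {b : Bool}
    {i j : Fin n} (h : sig p c b i ≤ sig p c b j) :
    c i * q p b j ≤ c j * q p b i := by
  have h' : c i / q p b i ≤ c j / q p b j := by
    rcases (Prod.Lex.le_iff.1 h) with h1 | ⟨h1, _⟩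
    · exact le_of_lt h1
    · exact le_of_eq h1
  rw [div_le_div_iff₀ (q_pos hp b i) (q_pos hp b j)] at h'
  linarith

/-- rank of `i` within `S` -/
noncomputable def rank (p c : Fin n → ℝ) (b : Bool) (S : Finset (Fin n)) (i : Fin n) : ℕ :=
  (S.filter (fun j => sig p c b j ≤ sig p c b i)).card

lemma two_le_rank {p c : Fin n → ℝ} {b : Bool} {S : Finset (Fin n)} (hS : S.Nonempty)
    {i : Fin n} (hi : i ∈ S) (hne : i ≠ argmin p c b S hS) : 2 ≤ rank p c b S i := by
  have h1 : argmin p c b S hS ∈ S.filter (fun j => sig p c b j ≤ sig p c b i) :=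
    Finset.mem_filter.2 ⟨argmin_mem p c b S hS, argmin_min p c b S hS hi⟩
  have h2 : i ∈ S.filter (fun j => sig p c b j ≤ sig p c b i) :=
    Finset.mem_filter.2 ⟨hi, le_refl _⟩
  have := Finset.one_lt_card.2 ⟨_, h1, _, h2, Ne.symm hne⟩
  unfold rank
  omega

lemma rank_erase_argmin {p c : Fin n → ℝ} {b : Bool} {S : Finset (Fin n)} (hS : S.Nonempty)
    {i : Fin n} (hi : i ∈ S) (hne : i ≠ argmin p c b S hS) :
    rank p c b (S.erase (argmin p c b S hS)) i = rank p c b S i - 1 := by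
  unfold rank
  rw [Finset.filter_erase, Finset.card_erase_of_mem]
  exact Finset.mem_filter.2 ⟨argmin_mem p c b S hS, argmin_min p c b S hS hi⟩

/-- Value of the optimal (static greedy) strategy's `b`-side verification cost. -/
noncomputable def W (p c : Fin n → ℝ) (b : Bool) (S : Finset (Fin n)) (κ : ℕ) : ℝ :=
  if h : κ = 0 ∨ S.card < κ then 0
  else
    have hS : S.Nonempty := Finset.card_pos.mp (by omega)
    let t := argmin p c b S hS
    have ht : t ∈ S := argmin_mem p c b S hS
    c t * P p b S κ + q p b t * W p c b (S.erase t) (κ - 1)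
      + (1 - q p b t) * W p c b (S.erase t) κ
termination_by S.card
decreasing_by
  · exact Finset.card_erase_lt_of_mem ht
  · exact Finset.card_erase_lt_of_mem ht

lemma W_zero (p c : Fin n → ℝ) (b : Bool) {S : Finset (Fin n)} {κ : ℕ}
    (h : κ = 0 ∨ S.card < κ) : W p c b S κ = 0 := by
  rw [W, dif_pos h]

lemma W_def (p c : Fin n → ℝ) (b : Bool) {S : Finset (Fin n)} {κ : ℕ}
    (h1 : 1 ≤ κ) (h2 : κ ≤ S.card) (hS : S.Nonempty) :
    W p c b S κ = c (argmin p c b S hS) * P p b S κ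
      + q p b (argmin p c b S hS) * W p c b (S.erase (argmin p c b S hS)) (κ - 1)
      + (1 - q p b (argmin p c b S hS)) * W p c b (S.erase (argmin p c b S hS)) κ := by
  rw [W, dif_neg (by omega)]

end KofN
namespace KofN

open Finset DTree

variable {n : ℕ} {p c : Fin n → ℝ} {b : Bool}

lemma W_expand (p c : Fin n → ℝ) (b : Bool) {S : Finset (Fin n)} {κ : ℕ}
    (h1 : 1 ≤ κ) (hS : S.Nonempty) :
    W p c b S κ = c (argmin p c b S hS) * P p b S κ
      + q p b (argmin p c b S hS) * W p c b (S.erase (argmin p c b S hS)) (κ - 1)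
      + (1 - q p b (argmin p c b S hS)) * W p c b (S.erase (argmin p c b S hS)) κ := by
  by_cases h2 : κ ≤ S.card
  · exact W_def p c b h1 h2 hS
  · push_neg at h2
    rw [W_zero p c b (Or.inr h2), P_eq_zero_of_card_lt p b h2]
    have hc1 : (S.erase (argmin p c b S hS)).card = S.card - 1 :=
      Finset.card_erase_of_mem (argmin_mem p c b S hS)
    have hcpos : 1 ≤ S.card := Finset.card_pos.2 hS
    rw [W_zero p c b (Or.inr (by omega)), W_zero p c b (Or.inr (by omega))]
    ring

lemma W_nonneg_aux (hp : ∀ i, 0 < p i ∧ p i < 1) (hc : ∀ i, 0 < c i) :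
    ∀ (m : ℕ) (S : Finset (Fin n)) (κ : ℕ), S.card ≤ m → 0 ≤ W p c b S κ := by
  intro m
  induction m with
  | zero =>
    intro S κ h
    have : S.card = 0 := by omega
    rcases Nat.eq_zero_or_pos κ with h0 | h0
    · rw [W_zero p c b (Or.inl h0)]
    · rw [W_zero p c b (Or.inr (by omega))]
  | succ m ih =>
    intro S κ h
    by_cases h0 : κ = 0 ∨ S.card < κ
    · rw [W_zero p c b h0]
    · push_neg at h0
      have hS : S.Nonempty := Finset.card_pos.mp (by omega)
      rw [W_def p c b (by omega) (by omega) hS]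
      have ht := argmin_mem p c b S hS
      have hce : (S.erase (argmin p c b S hS)).card = S.card - 1 :=
        Finset.card_erase_of_mem ht
      have h1 := ih (S.erase (argmin p c b S hS)) (κ - 1) (by omega)
      have h2 := ih (S.erase (argmin p c b S hS)) κ (by omega)
      have hq1 := q_pos hp b (argmin p c b S hS)
      have hq2 := q_lt_one hp b (argmin p c b S hS)
      have := P_nonneg hp b S κ
      have := (hc (argmin p c b S hS)).le
      nlinarith

lemma W_nonneg (hp : ∀ i, 0 < p i ∧ p i < 1) (hc : ∀ i, 0 < c i)
    (S : Finset (Fin n)) (κ : ℕ) : 0 ≤ W p c b S κ :=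
  W_nonneg_aux hp hc S.card S κ le_rfl

/-- Exchange inequality: starting with any `i ∈ S` and continuing optimally is
at least the greedy value. -/
lemma exchange_le (hp : ∀ i, 0 < p i ∧ p i < 1) (hc : ∀ i, 0 < c i) :
    ∀ (m : ℕ) (S : Finset (Fin n)) (κ : ℕ) (i : Fin n), S.card ≤ m → i ∈ S →
    W p c b S κ ≤ c i * P p b S κ + q p b i * W p c b (S.erase i) (κ - 1)
      + (1 - q p b i) * W p c b (S.erase i) κ := by
  intro m
  induction m with
  | zero =>
    intro S κ i hcard hi
    have := Finset.card_pos.2 ⟨i, hi⟩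
    omega
  | succ m ih =>
    intro S κ i hcard hi
    have hS : S.Nonempty := ⟨i, hi⟩
    have hq1 := q_pos hp b i
    have hq2 := q_lt_one hp b i
    have hWn1 := W_nonneg (b := b) hp hc (S.erase i) (κ - 1)
    have hWn2 := W_nonneg (b := b) hp hc (S.erase i) κ
    have hPn := P_nonneg hp b S κ
    by_cases hκ0 : κ = 0
    · subst hκ0
      rw [W_zero p c b (Or.inl rfl)]
      have := (hc i).le
      nlinarith
    have hκ : 1 ≤ κ := by omega
    by_cases hit : i = argmin p c b S hS
    · rw [hit]
      exact le_of_eq (W_expand p c b hκ hS)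
    -- i is not the greedy pivot t
    set t := argmin p c b S hS with ht_def
    have htS : t ∈ S := argmin_mem p c b S hS
    have hti : t ∈ S.erase i := Finset.mem_erase.2 ⟨fun h => hit h.symm, htS⟩
    have hit' : i ∈ S.erase t := Finset.mem_erase.2 ⟨hit, hi⟩
    have hcardS : 1 ≤ S.card := Finset.card_pos.2 hS
    have hcet : (S.erase t).card = S.card - 1 := Finset.card_erase_of_mem htS
    have hcet' : (S.erase t).card ≤ m := by omega
    have hSi : (S.erase i).Nonempty := ⟨t, hti⟩
    have hSt : (S.erase t).Nonempty := ⟨i, hit'⟩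
    have hargE : argmin p c b (S.erase i) hSi = t := argmin_erase p c b hS hi hit hSi
    have hcomm : (S.erase i).erase t = (S.erase t).erase i := Finset.erase_right_comm
    have hq1t := q_pos hp b t
    have hq2t := q_lt_one hp b t
    have hq : c t * q p b i ≤ c i * q p b t :=
      ratio_le_of_sig_le hp (argmin_min p c b S hS hi)
    have hLHS := W_expand p c b hκ hS
    rw [← ht_def] at hLHS
    by_cases hκ1 : κ = 1
    · subst hκ1
      simp only [Nat.sub_self] at *
      -- expansions
      have ih1 := ih (S.erase t) 1 i hcet' hit'
      simp only [Nat.sub_self] at ih1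
      rw [W_zero p c b (Or.inl rfl)] at ih1 hLHS
      have eR : W p c b (S.erase i) 1
          = c t * P p b (S.erase i) 1
            + (1 - q p b t) * W p c b ((S.erase t).erase i) 1 := by
        have hthis := W_expand p c b le_rfl hSi
        rw [hargE] at hthis
        simp only [Nat.sub_self] at hthis
        rw [hthis, hcomm, W_zero p c b (Or.inl rfl)]
        ring
      have er1 : (1 - q p b t) * P p b (S.erase t) 1 = P p b S 1 - q p b t := by
        have := P_rec p htS b le_rfl
        simp only [Nat.sub_self] at this
        rw [P_zero] at this
        linarith
      have er2 : (1 - q p b i) * P p b (S.erase i) 1 = P p b S 1 - q p b i := by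
        have := P_rec p hi b le_rfl
        simp only [Nat.sub_self] at this
        rw [P_zero] at this
        linarith
      have hW'' := W_nonneg (b := b) hp hc ((S.erase t).erase i) 1
      have hPt := P_nonneg hp b (S.erase t) 1
      have hPi := P_nonneg hp b (S.erase i) 1
      rw [hLHS, W_zero p c b (Or.inl rfl), eR]
      have key : (c i * P p b S 1 + (1 - q p b i) *
            (c t * P p b (S.erase i) 1 + (1 - q p b t) * W p c b ((S.erase t).erase i) 1))
          - (c t * P p b S 1 + (1 - q p b t) *
            (c i * P p b (S.erase t) 1 + (1 - q p b i) * W p c b ((S.erase t).erase i) 1))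
          = c i * q p b t - c t * q p b i := by
        linear_combination (-(c i)) * er1 + c t * er2
      have step1 : W p c b (S.erase t) 1
          ≤ c i * P p b (S.erase t) 1 + (1 - q p b i) * W p c b ((S.erase t).erase i) 1 := by
        linarith [ih1]
      nlinarith [step1]
    -- κ ≥ 2
    have hκ2 : 2 ≤ κ := by omega
    have ih1 := ih (S.erase t) (κ - 1) i hcet' hit'
    have ih2 := ih (S.erase t) κ i hcet' hit'
    have eR1 : W p c b (S.erase i) (κ - 1)
        = c t * P p b (S.erase i) (κ - 1)
          + q p b t * W p c b ((S.erase t).erase i) (κ - 1 - 1)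
          + (1 - q p b t) * W p c b ((S.erase t).erase i) (κ - 1) := by
      have := W_expand p c b (by omega : 1 ≤ κ - 1) hSi
      rw [hargE] at this
      rw [this, hcomm]
    have eR2 : W p c b (S.erase i) κ
        = c t * P p b (S.erase i) κ
          + q p b t * W p c b ((S.erase t).erase i) (κ - 1)
          + (1 - q p b t) * W p c b ((S.erase t).erase i) κ := by
      have := W_expand p c b hκ hSi
      rw [hargE] at this
      rw [this, hcomm]
    have er1 : q p b t * P p b (S.erase t) (κ - 1) + (1 - q p b t) * P p b (S.erase t) κ
        = P p b S κ := (P_rec p htS b hκ).symm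
    have er2 : q p b i * P p b (S.erase i) (κ - 1) + (1 - q p b i) * P p b (S.erase i) κ
        = P p b S κ := (P_rec p hi b hκ).symm
    rw [hLHS, eR1, eR2]
    have step1 : c t * P p b S κ + q p b t * W p c b (S.erase t) (κ - 1)
          + (1 - q p b t) * W p c b (S.erase t) κ
        ≤ c t * P p b S κ
          + q p b t * (c i * P p b (S.erase t) (κ - 1)
            + q p b i * W p c b ((S.erase t).erase i) (κ - 1 - 1)
            + (1 - q p b i) * W p c b ((S.erase t).erase i) (κ - 1))
          + (1 - q p b t) * (c i * P p b (S.erase t) κ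
            + q p b i * W p c b ((S.erase t).erase i) (κ - 1)
            + (1 - q p b i) * W p c b ((S.erase t).erase i) κ) := by
      have h1 := mul_le_mul_of_nonneg_left ih1 hq1t.le
      have h2 := mul_le_mul_of_nonneg_left ih2 (by linarith : (0:ℝ) ≤ 1 - q p b t)
      linarith
    refine le_trans step1 (le_of_eq ?_)
    linear_combination c i * er1 - c t * er2

end KofN
namespace KofN

open Finset DTree

variable {n : ℕ} {p c : Fin n → ℝ} {b : Bool}

/-- Exchange equality: starting with any `i` among the `κ` smallest keys of `S`
and continuing greedily achieves exactly the greedy value. -/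
lemma exchange_eq (hp : ∀ i, 0 < p i ∧ p i < 1) (hc : ∀ i, 0 < c i) :
    ∀ (m : ℕ) (S : Finset (Fin n)) (κ : ℕ) (i : Fin n), S.card ≤ m → i ∈ S →
    1 ≤ κ → rank p c b S i ≤ κ →
    W p c b S κ = c i * P p b S κ + q p b i * W p c b (S.erase i) (κ - 1)
      + (1 - q p b i) * W p c b (S.erase i) κ := by
  intro m
  induction m with
  | zero =>
    intro S κ i hcard hi
    have := Finset.card_pos.2 ⟨i, hi⟩
    omega
  | succ m ih =>
    intro S κ i hcard hi hκ hrank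
    have hS : S.Nonempty := ⟨i, hi⟩
    by_cases hit : i = argmin p c b S hS
    · rw [hit]
      exact W_expand p c b hκ hS
    set t := argmin p c b S hS with ht_def
    have htS : t ∈ S := argmin_mem p c b S hS
    have hti : t ∈ S.erase i := Finset.mem_erase.2 ⟨fun h => hit h.symm, htS⟩
    have hit' : i ∈ S.erase t := Finset.mem_erase.2 ⟨hit, hi⟩
    have hcardS : 1 ≤ S.card := Finset.card_pos.2 hS
    have hcet : (S.erase t).card = S.card - 1 := Finset.card_erase_of_mem htS
    have hcet' : (S.erase t).card ≤ m := by omega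
    have hSi : (S.erase i).Nonempty := ⟨t, hti⟩
    have hargE : argmin p c b (S.erase i) hSi = t := argmin_erase p c b hS hi hit hSi
    have hcomm : (S.erase i).erase t = (S.erase t).erase i := Finset.erase_right_comm
    -- since i ≠ t, rank of i is at least 2, so κ ≥ 2
    have hrank2 : 2 ≤ rank p c b S i := two_le_rank hS hi hit
    have hκ2 : 2 ≤ κ := le_trans hrank2 hrank
    have hrankE : rank p c b (S.erase t) i ≤ κ - 1 := by
      rw [rank_erase_argmin hS hi hit]
      omega
    have ih1 := ih (S.erase t) (κ - 1) i hcet' hit' (by omega) hrankE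
    have ih2 := ih (S.erase t) κ i hcet' hit' (by omega) (le_trans hrankE (by omega))
    have eR1 : W p c b (S.erase i) (κ - 1)
        = c t * P p b (S.erase i) (κ - 1)
          + q p b t * W p c b ((S.erase t).erase i) (κ - 1 - 1)
          + (1 - q p b t) * W p c b ((S.erase t).erase i) (κ - 1) := by
      have hthis := W_expand p c b (by omega : 1 ≤ κ - 1) hSi
      rw [hargE] at hthis
      rw [hthis, hcomm]
    have eR2 : W p c b (S.erase i) κ
        = c t * P p b (S.erase i) κ
          + q p b t * W p c b ((S.erase t).erase i) (κ - 1)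
          + (1 - q p b t) * W p c b ((S.erase t).erase i) κ := by
      have hthis := W_expand p c b (by omega : 1 ≤ κ) hSi
      rw [hargE] at hthis
      rw [hthis, hcomm]
    have er1 : q p b t * P p b (S.erase t) (κ - 1) + (1 - q p b t) * P p b (S.erase t) κ
        = P p b S κ := (P_rec p htS b (by omega)).symm
    have er2 : q p b i * P p b (S.erase i) (κ - 1) + (1 - q p b i) * P p b (S.erase i) κ
        = P p b S κ := (P_rec p hi b (by omega)).symm
    rw [W_expand p c b hκ hS, ← ht_def, ih1, ih2, eR1, eR2]
    linear_combination c i * er1 - c t * er2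

end KofN
namespace KofN

open Finset DTree

variable {n : ℕ} {p c : Fin n → ℝ} {b : Bool}

/-- If a node-rooted tree computes the residual threshold function, its subtrees
compute the residual functions of the child states. -/
lemma subtree_eval {j : Fin n} {S : Finset (Fin n)} (hj : j ∈ S) {κ : ℕ} (hκ : 1 ≤ κ)
    {t0 t1 : DTree n} (h0 : t0.Proper (S.erase j)ᶜ) (h1 : t1.Proper (S.erase j)ᶜ)
    {u v : ℕ}
    (hev : ∀ a, (DTree.node j t0 t1).eval a = if κ ≤ Nb b S a then u else v) :
    (∀ a, (if b then t1 else t0).eval a = if κ - 1 ≤ Nb b (S.erase j) a then u else v)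
      ∧ (∀ a, (if b then t0 else t1).eval a = if κ ≤ Nb b (S.erase j) a then u else v) := by
  have hjc : j ∈ (S.erase j)ᶜ := by simp
  have hw : (if b then t1 else t0).Proper (S.erase j)ᶜ := by
    cases b
    · simpa using h0
    · simpa using h1
  have ho : (if b then t0 else t1).Proper (S.erase j)ᶜ := by
    cases b
    · simpa using h1
    · simpa using h0
  constructor
  · intro a
    set a' := Function.update a j b with ha'
    have haj : a' j = b := by simp [ha']
    have e1 : (if b then t1 else t0).eval a = (if b then t1 else t0).eval a' := by
      rw [ha', eval_update hw hjc]
    have e2 : (if b then t1 else t0).eval a' = (DTree.node j t0 t1).eval a' := by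
      simp only [DTree.eval, haj]
      cases b <;> simp
    rw [e1, e2, hev a']
    have hNb : Nb b S a' = Nb b (S.erase j) a + 1 := by
      rw [Nb_erase hj b a', if_pos haj, Nb_update_of_not_mem (Finset.notMem_erase j S)]
    rw [hNb]
    apply if_congr _ rfl rfl
    omega
  · intro a
    set a' := Function.update a j (!b) with ha'
    have haj : a' j = !b := by simp [ha']
    have e1 : (if b then t0 else t1).eval a = (if b then t0 else t1).eval a' := by
      rw [ha', eval_update ho hjc]
    have e2 : (if b then t0 else t1).eval a' = (DTree.node j t0 t1).eval a' := by
      simp only [DTree.eval, haj]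
      cases b <;> simp
    rw [e1, e2, hev a']
    have hNb : Nb b S a' = Nb b (S.erase j) a := by
      rw [Nb_erase hj b a', if_neg (by simp [haj]),
        Nb_update_of_not_mem (Finset.notMem_erase j S)]
      omega
    rw [hNb]

/-- Lower bound: any proper tree computing the residual threshold function has
`b`-side conditional cost at least the greedy value `W`. -/
lemma tree_lower (hp : ∀ i, 0 < p i ∧ p i < 1) (hc : ∀ i, 0 < c i) :
    ∀ (m : ℕ) (S : Finset (Fin n)) (κ : ℕ) (T : DTree n) (u v : ℕ), S.card ≤ m → u ≠ v →
    T.Proper Sᶜ → (∀ a, T.eval a = if κ ≤ Nb b S a then u else v) →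
    W p c b S κ ≤ Gsum p b S κ (fun a => T.cost c a) := by
  intro m
  induction m with
  | zero =>
    intro S κ T u v hcard huv hprop hev
    have hcard0 : S.card = 0 := by omega
    have : κ = 0 ∨ S.card < κ := by omega
    rw [W_zero p c b this]
    exact Gsum_nonneg hp fun a => cost_nonneg hc T a
  | succ m ih =>
    intro S κ T u v hcard huv hprop hev
    by_cases hedge : κ = 0 ∨ S.card < κ
    · rw [W_zero p c b hedge]
      exact Gsum_nonneg hp fun a => cost_nonneg hc T a
    push_neg at hedge
    obtain ⟨hκ0, hκcard⟩ := hedge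
    have hκ : 1 ≤ κ := by omega
    cases T with
    | leaf w =>
      exfalso
      have ha1 := hev (fun _ => b)
      have ha0 := hev (fun _ => !b)
      have hN1 : Nb b S (fun _ => b) = S.card := by
        unfold Nb
        rw [Finset.filter_true_of_mem (fun _ _ => rfl)]
      have hN0 : Nb b S (fun _ => !b) = 0 := by
        unfold Nb
        rw [Finset.filter_false_of_mem (fun _ _ => by simp), Finset.card_empty]
      rw [hN1, if_pos (by omega)] at ha1
      rw [hN0, if_neg (by omega)] at ha0
      exact huv (ha1 ▸ ha0 ▸ rfl)
    | node j t0 t1 =>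
      obtain ⟨hjc, h0, h1⟩ := hprop
      have hj : j ∈ S := by
        by_contra hjS
        exact hjc (Finset.mem_compl.2 hjS)
      have hcompl : insert j Sᶜ = (S.erase j)ᶜ := (Finset.compl_erase).symm
      rw [hcompl] at h0 h1
      obtain ⟨hwe, hoe⟩ := subtree_eval hj hκ h0 h1 hev
      have hw : (if b then t1 else t0).Proper (S.erase j)ᶜ := by
        cases b
        · simpa using h0
        · simpa using h1
      have ho : (if b then t0 else t1).Proper (S.erase j)ᶜ := by
        cases b
        · simpa using h1
        · simpa using h0
      have hcard' : (S.erase j).card ≤ m := by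
        have := Finset.card_erase_of_mem hj
        have := Finset.card_pos.2 ⟨j, hj⟩
        omega
      have ihw := ih (S.erase j) (κ - 1) (if b then t1 else t0) u v hcard' huv hw hwe
      have iho := ih (S.erase j) κ (if b then t0 else t1) u v hcard' huv ho hoe
      rw [cost_split hj b hκ t0 t1 h0 h1]
      have hA := exchange_le (b := b) hp hc S.card S κ j le_rfl hj
      have hq1 := q_pos hp b j
      have hq2 := q_lt_one hp b j
      nlinarith [ihw, iho, hA]

end KofN
namespace KofN

open Finset DTree

variable {n : ℕ}

lemma one_le_rank {p c : Fin n → ℝ} {b : Bool} {S : Finset (Fin n)} {i : Fin n}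
    (hi : i ∈ S) : 1 ≤ rank p c b S i :=
  Finset.card_pos.2 ⟨i, Finset.mem_filter.2 ⟨hi, le_refl _⟩⟩

lemma rank_le_card (p c : Fin n → ℝ) (b : Bool) (S : Finset (Fin n)) (i : Fin n) :
    rank p c b S i ≤ S.card := Finset.card_filter_le _ _

lemma rank_injOn (p c : Fin n → ℝ) (b : Bool) (S : Finset (Fin n)) :
    Set.InjOn (rank p c b S) S := by
  intro i hi j hj hij
  by_contra hne
  rcases le_total (sig p c b i) (sig p c b j) with hle | hle
  · have hsub : S.filter (fun x => sig p c b x ≤ sig p c b i)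
        ⊆ S.filter (fun x => sig p c b x ≤ sig p c b j) := by
      intro x hx
      simp only [Finset.mem_filter] at hx ⊢
      exact ⟨hx.1, le_trans hx.2 hle⟩
    have heq := Finset.eq_of_subset_of_card_le hsub (le_of_eq hij.symm)
    have : j ∈ S.filter (fun x => sig p c b x ≤ sig p c b i) := by
      rw [heq]; exact Finset.mem_filter.2 ⟨hj, le_refl _⟩
    have : sig p c b j ≤ sig p c b i := (Finset.mem_filter.1 this).2
    exact hne (sig_injective p c b (le_antisymm hle this))
  · have hsub : S.filter (fun x => sig p c b x ≤ sig p c b j)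
        ⊆ S.filter (fun x => sig p c b x ≤ sig p c b i) := by
      intro x hx
      simp only [Finset.mem_filter] at hx ⊢
      exact ⟨hx.1, le_trans hx.2 hle⟩
    have heq := Finset.eq_of_subset_of_card_le hsub (le_of_eq hij)
    have : i ∈ S.filter (fun x => sig p c b x ≤ sig p c b j) := by
      rw [heq]; exact Finset.mem_filter.2 ⟨hi, le_refl _⟩
    have : sig p c b i ≤ sig p c b j := (Finset.mem_filter.1 this).2
    exact hne (sig_injective p c b (le_antisymm this hle))

lemma rank_image (p c : Fin n → ℝ) (b : Bool) (S : Finset (Fin n)) :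
    S.image (rank p c b S) = Finset.Icc 1 S.card := by
  apply Finset.eq_of_subset_of_card_le
  · intro x hx
    obtain ⟨i, hi, rfl⟩ := Finset.mem_image.1 hx
    exact Finset.mem_Icc.2 ⟨one_le_rank hi, rank_le_card p c b S i⟩
  · rw [Nat.card_Icc, Finset.card_image_of_injOn (rank_injOn p c b S)]
    omega

lemma card_rank_le (p c : Fin n → ℝ) (b : Bool) {S : Finset (Fin n)} {κ : ℕ}
    (hκ : κ ≤ S.card) : (S.filter (fun i => rank p c b S i ≤ κ)).card = κ := by
  have h1 : (S.filter (fun i => rank p c b S i ≤ κ)).image (rank p c b S)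
      = (S.image (rank p c b S)).filter (fun x => x ≤ κ) :=
    (Finset.filter_image (p := fun x => x ≤ κ) (f := rank p c b S) (s := S)).symm
  have h2 : (S.filter (fun i => rank p c b S i ≤ κ)).card
      = ((S.filter (fun i => rank p c b S i ≤ κ)).image (rank p c b S)).card := by
    rw [Finset.card_image_of_injOn ((rank_injOn p c b S).mono (by
      intro x hx
      exact (Finset.mem_filter.1 hx).1))]
  rw [h2, h1, rank_image]
  have h3 : (Finset.Icc 1 S.card).filter (fun x => x ≤ κ) = Finset.Icc 1 κ := by
    ext x
    simp only [Finset.mem_filter, Finset.mem_Icc]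
    omega
  rw [h3, Nat.card_Icc]
  omega

lemma pivot_exists (p c : Fin n → ℝ) {S : Finset (Fin n)} {κ : ℕ}
    (h1 : 1 ≤ κ) (h2 : κ ≤ S.card) :
    ∃ i, i ∈ S ∧ rank p c true S i ≤ κ ∧ rank p c false S i ≤ S.card + 1 - κ := by
  set A := S.filter (fun i => rank p c true S i ≤ κ) with hA
  set B := S.filter (fun i => rank p c false S i ≤ S.card + 1 - κ) with hB
  have hcA : A.card = κ := card_rank_le p c true h2
  have hcB : B.card = S.card + 1 - κ := card_rank_le p c false (by omega)
  have hsub : A ∪ B ⊆ S := by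
    intro x hx
    rcases Finset.mem_union.1 hx with h | h
    · exact (Finset.mem_filter.1 h).1
    · exact (Finset.mem_filter.1 h).1
  have hcu : (A ∪ B).card ≤ S.card := Finset.card_le_card hsub
  have hint := Finset.card_inter_add_card_union A B
  have hne : (A ∩ B).Nonempty := by
    rw [← Finset.card_pos]
    omega
  obtain ⟨i, hi⟩ := hne
  rw [Finset.mem_inter, hA, hB] at hi
  exact ⟨i, (Finset.mem_filter.1 hi.1).1, (Finset.mem_filter.1 hi.1).2,
    (Finset.mem_filter.1 hi.2).2⟩

/-- the pivot: an index simultaneously cheap for verifying `b = true` and `b = false`. -/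
noncomputable def pivot (p c : Fin n → ℝ) (S : Finset (Fin n)) (κ : ℕ)
    (h1 : 1 ≤ κ) (h2 : κ ≤ S.card) : Fin n :=
  (pivot_exists p c h1 h2).choose

lemma pivot_mem (p c : Fin n → ℝ) {S : Finset (Fin n)} {κ : ℕ}
    (h1 : 1 ≤ κ) (h2 : κ ≤ S.card) : pivot p c S κ h1 h2 ∈ S :=
  (pivot_exists p c h1 h2).choose_spec.1

lemma pivot_rank_true (p c : Fin n → ℝ) {S : Finset (Fin n)} {κ : ℕ}
    (h1 : 1 ≤ κ) (h2 : κ ≤ S.card) : rank p c true S (pivot p c S κ h1 h2) ≤ κ :=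
  (pivot_exists p c h1 h2).choose_spec.2.1

lemma pivot_rank_false (p c : Fin n → ℝ) {S : Finset (Fin n)} {κ : ℕ}
    (h1 : 1 ≤ κ) (h2 : κ ≤ S.card) :
    rank p c false S (pivot p c S κ h1 h2) ≤ S.card + 1 - κ :=
  (pivot_exists p c h1 h2).choose_spec.2.2

/-- The simultaneously optimal decision tree for the `κ`-of-`S` threshold function. -/
noncomputable def build (p c : Fin n → ℝ) (S : Finset (Fin n)) (κ : ℕ) : DTree n :=
  if h1 : κ = 0 then DTree.leaf 1
  else if h2 : S.card < κ then DTree.leaf 0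
  else
    DTree.node (pivot p c S κ (by omega) (by omega))
      (build p c (S.erase (pivot p c S κ (by omega) (by omega))) κ)
      (build p c (S.erase (pivot p c S κ (by omega) (by omega))) (κ - 1))
termination_by S.card
decreasing_by
  · exact Finset.card_erase_lt_of_mem (pivot_mem p c (by omega) (by omega))
  · exact Finset.card_erase_lt_of_mem (pivot_mem p c (by omega) (by omega))

lemma build_eq (p c : Fin n → ℝ) {S : Finset (Fin n)} {κ : ℕ}
    (h1 : 1 ≤ κ) (h2 : κ ≤ S.card) :
    build p c S κ
      = DTree.node (pivot p c S κ h1 h2)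
          (build p c (S.erase (pivot p c S κ h1 h2)) κ)
          (build p c (S.erase (pivot p c S κ h1 h2)) (κ - 1)) := by
  rw [build, dif_neg (by omega), dif_neg (by omega)]

lemma build_proper (p c : Fin n → ℝ) :
    ∀ (m : ℕ) (S : Finset (Fin n)) (κ : ℕ), S.card ≤ m → (build p c S κ).Proper Sᶜ := by
  intro m
  induction m with
  | zero =>
    intro S κ h
    have h0 : S.card = 0 := by omega
    rcases Nat.eq_zero_or_pos κ with hκ | hκ
    · rw [build, dif_pos hκ]; trivial
    · rw [build, dif_neg (by omega), dif_pos (by omega)]; trivial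
  | succ m ih =>
    intro S κ h
    by_cases hκ : κ = 0
    · rw [build, dif_pos hκ]; trivial
    by_cases h2 : S.card < κ
    · rw [build, dif_neg hκ, dif_pos h2]; trivial
    have h1 : 1 ≤ κ := by omega
    have h2' : κ ≤ S.card := by omega
    rw [build_eq p c h1 h2']
    set i := pivot p c S κ h1 h2' with hidef
    have hiS : i ∈ S := pivot_mem p c h1 h2'
    have hcompl : insert i Sᶜ = (S.erase i)ᶜ := (Finset.compl_erase).symm
    have hcard' : (S.erase i).card ≤ m := by
      have := Finset.card_erase_of_mem hiS
      have := Finset.card_pos.2 ⟨i, hiS⟩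
      omega
    refine ⟨by simp [hiS], ?_, ?_⟩
    · rw [hcompl]; exact ih _ κ hcard'
    · rw [hcompl]; exact ih _ (κ - 1) hcard'

lemma build_eval (p c : Fin n → ℝ) :
    ∀ (m : ℕ) (S : Finset (Fin n)) (κ : ℕ), S.card ≤ m →
    ∀ a, (build p c S κ).eval a = if κ ≤ Nb true S a then 1 else 0 := by
  intro m
  induction m with
  | zero =>
    intro S κ h a
    have h0 : S.card = 0 := by omega
    have hN : Nb true S a = 0 := by
      have := Nb_le_card true S a
      omega
    rcases Nat.eq_zero_or_pos κ with hκ | hκ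
    · rw [build, dif_pos hκ, hN, if_pos (by omega)]; rfl
    · rw [build, dif_neg (by omega), dif_pos (by omega), hN, if_neg (by omega)]; rfl
  | succ m ih =>
    intro S κ h a
    by_cases hκ : κ = 0
    · rw [build, dif_pos hκ, hκ, if_pos (by omega)]; rfl
    by_cases h2 : S.card < κ
    · rw [build, dif_neg hκ, dif_pos h2]
      have := Nb_le_card true S a
      rw [if_neg (by omega)]; rfl
    have h1 : 1 ≤ κ := by omega
    have h2' : κ ≤ S.card := by omega
    rw [build_eq p c h1 h2']
    set i := pivot p c S κ h1 h2' with hidef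
    have hiS : i ∈ S := pivot_mem p c h1 h2'
    have hcard' : (S.erase i).card ≤ m := by
      have := Finset.card_erase_of_mem hiS
      have := Finset.card_pos.2 ⟨i, hiS⟩
      omega
    have hNb := Nb_erase hiS true a
    simp only [DTree.eval]
    by_cases hai : a i
    · rw [if_pos hai, ih _ (κ - 1) hcard' a]
      rw [if_pos (by simp [hai])] at hNb
      apply if_congr _ rfl rfl
      omega
    · rw [if_neg hai, ih _ κ hcard' a]
      rw [if_neg (by simp [Bool.not_eq_true] at hai ⊢; simp [hai])] at hNb
      apply if_congr _ rfl rfl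
      omega

end KofN
namespace KofN

open Finset DTree

variable {n : ℕ} {p c : Fin n → ℝ}

lemma Gsum_leaf (p : Fin n → ℝ) (b : Bool) (S : Finset (Fin n)) (κ : ℕ) (w : ℕ) :
    Gsum p b S κ (fun a => (DTree.leaf w).cost c a) = 0 := by
  unfold Gsum
  apply Finset.sum_eq_zero
  intro a _
  show DTree.cost c (DTree.leaf w) a * pr p a = 0
  unfold DTree.cost
  ring

lemma build_cost_true (hp : ∀ i, 0 < p i ∧ p i < 1) (hc : ∀ i, 0 < c i) :
    ∀ (m : ℕ) (S : Finset (Fin n)) (κ : ℕ), S.card ≤ m →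
    Gsum p true S κ (fun a => (build p c S κ).cost c a) = W p c true S κ := by
  intro m
  induction m with
  | zero =>
    intro S κ h
    have h0 : S.card = 0 := by omega
    rcases Nat.eq_zero_or_pos κ with hκ | hκ
    · rw [build, dif_pos hκ, Gsum_leaf, W_zero p c true (Or.inl hκ)]
    · rw [build, dif_neg (by omega), dif_pos (by omega), Gsum_leaf,
        W_zero p c true (Or.inr (by omega))]
  | succ m ih =>
    intro S κ h
    by_cases hκ : κ = 0
    · rw [build, dif_pos hκ, Gsum_leaf, W_zero p c true (Or.inl hκ)]
    by_cases h2 : S.card < κ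
    · rw [build, dif_neg hκ, dif_pos h2, Gsum_leaf, W_zero p c true (Or.inr h2)]
    have h1 : 1 ≤ κ := by omega
    have h2' : κ ≤ S.card := by omega
    rw [build_eq p c h1 h2']
    set i := pivot p c S κ h1 h2' with hidef
    have hiS : i ∈ S := pivot_mem p c h1 h2'
    have hcard' : (S.erase i).card ≤ m := by
      have := Finset.card_erase_of_mem hiS
      have := Finset.card_pos.2 ⟨i, hiS⟩
      omega
    have hprop0 : (build p c (S.erase i) κ).Proper (S.erase i)ᶜ :=
      build_proper p c (S.erase i).card _ κ le_rfl
    have hprop1 : (build p c (S.erase i) (κ - 1)).Proper (S.erase i)ᶜ :=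
      build_proper p c (S.erase i).card _ (κ - 1) le_rfl
    rw [cost_split hiS true h1 _ _ hprop0 hprop1]
    simp only [if_true]
    rw [ih _ (κ - 1) hcard', ih _ κ hcard']
    exact (exchange_eq (b := true) hp hc S.card S κ i le_rfl hiS h1
      (pivot_rank_true p c h1 h2')).symm

lemma build_cost_false (hp : ∀ i, 0 < p i ∧ p i < 1) (hc : ∀ i, 0 < c i) :
    ∀ (m : ℕ) (S : Finset (Fin n)) (κ : ℕ), S.card ≤ m →
    Gsum p false S (S.card + 1 - κ) (fun a => (build p c S κ).cost c a)
      = W p c false S (S.card + 1 - κ) := by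
  intro m
  induction m with
  | zero =>
    intro S κ h
    have h0 : S.card = 0 := by omega
    rcases Nat.eq_zero_or_pos κ with hκ | hκ
    · rw [build, dif_pos hκ, Gsum_leaf, W_zero p c false (Or.inr (by omega))]
    · have : S.card + 1 - κ = 0 := by omega
      rw [build, dif_neg (by omega), dif_pos (by omega), Gsum_leaf, this,
        W_zero p c false (Or.inl rfl)]
  | succ m ih =>
    intro S κ h
    by_cases hκ : κ = 0
    · rw [build, dif_pos hκ, Gsum_leaf, W_zero p c false (Or.inr (by omega))]
    by_cases h2 : S.card < κ
    · have : S.card + 1 - κ = 0 := by omega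
      rw [build, dif_neg hκ, dif_pos h2, Gsum_leaf, this, W_zero p c false (Or.inl rfl)]
    have h1 : 1 ≤ κ := by omega
    have h2' : κ ≤ S.card := by omega
    set ζ := S.card + 1 - κ with hζdef
    have hζ1 : 1 ≤ ζ := by omega
    have hζ2 : ζ ≤ S.card := by omega
    rw [build_eq p c h1 h2']
    set i := pivot p c S κ h1 h2' with hidef
    have hiS : i ∈ S := pivot_mem p c h1 h2'
    have hcerase : (S.erase i).card = S.card - 1 := Finset.card_erase_of_mem hiS
    have hcard' : (S.erase i).card ≤ m := by
      have := Finset.card_pos.2 ⟨i, hiS⟩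
      omega
    have hprop0 : (build p c (S.erase i) κ).Proper (S.erase i)ᶜ :=
      build_proper p c (S.erase i).card _ κ le_rfl
    have hprop1 : (build p c (S.erase i) (κ - 1)).Proper (S.erase i)ᶜ :=
      build_proper p c (S.erase i).card _ (κ - 1) le_rfl
    rw [cost_split hiS false hζ1 _ _ hprop0 hprop1]
    simp only [Bool.false_eq_true, if_false]
    have ih0 := ih (S.erase i) κ hcard'
    have ih1 := ih (S.erase i) (κ - 1) hcard'
    have hz0 : (S.erase i).card + 1 - κ = ζ - 1 := by omega
    have hz1 : (S.erase i).card + 1 - (κ - 1) = ζ := by omega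
    rw [hz0] at ih0
    rw [hz1] at ih1
    rw [ih0, ih1]
    exact (exchange_eq (b := false) hp hc S.card S ζ i le_rfl hiS hζ1
      (pivot_rank_false p c h1 h2')).symm

end KofN

open Finset KofN in
theorem stmt19 {n : ℕ} (hn : 1 ≤ n) (p c : Fin n → ℝ)
    (hp : ∀ i, 0 < p i ∧ p i < 1) (hc : ∀ i, 0 < c i)
    (k : ℕ) (hk1 : 1 ≤ k) (hkn : k ≤ n) :
    OPTcost p c (fun a => if k ≤ N1 a then 1 else 0) =
      minLCost p c (fun a => if k ≤ N1 a then 1 else 0) 0 +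
        minLCost p c (fun a => if k ≤ N1 a then 1 else 0) 1 := by
  have hcu : (Finset.univ : Finset (Fin n)).card = n := by simp
  have hN1 : ∀ a : Fin n → Bool, N1 a = Nb true Finset.univ a := fun a => rfl
  have hNtf : ∀ a : Fin n → Bool, Nb true Finset.univ a + Nb false Finset.univ a = n :=
    fun a => by rw [Nb_true_add_false, hcu]
  have hiff : ∀ a : Fin n → Bool, (k ≤ N1 a) ↔ ¬ (n + 1 - k ≤ Nb false Finset.univ a) := by
    intro a
    rw [hN1 a]
    have := hNtf a
    omega
  set Wt := W p c true Finset.univ k with hWt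
  set Wf := W p c false Finset.univ (n + 1 - k) with hWf
  -- the filtered index sets
  have hfil1 : Finset.univ.filter (fun a : Fin n → Bool => (if k ≤ N1 a then 1 else 0) = 1)
      = Finset.univ.filter (fun a => k ≤ Nb true Finset.univ a) := by
    apply Finset.filter_congr
    intro a _
    rw [← hN1 a]
    by_cases hik : k ≤ N1 a <;> simp [hik]
  have hfil0 : Finset.univ.filter (fun a : Fin n → Bool => (if k ≤ N1 a then 1 else 0) = 0)
      = Finset.univ.filter (fun a => n + 1 - k ≤ Nb false Finset.univ a) := by
    apply Finset.filter_congr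
    intro a _
    have h2 := hiff a
    by_cases hik : k ≤ N1 a <;> simp [hik] <;> omega
  -- properness over the empty used set is properness over univᶜ
  have hcomplu : (Finset.univ : Finset (Fin n))ᶜ = (∅ : Finset (Fin n)) := Finset.compl_univ
  -- lower bounds for arbitrary trees computing h
  have lb1 : ∀ T : DTree n, T.Proper ∅ → (∀ a, T.eval a = if k ≤ N1 a then 1 else 0) →
      Wt ≤ ∑ a ∈ Finset.univ.filter
          (fun a : Fin n → Bool => (if k ≤ N1 a then 1 else 0) = 1),
        T.cost c a * pr p a := by
    intro T hprop hev
    rw [hfil1]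
    have := tree_lower (b := true) hp hc n Finset.univ k T 1 0 (le_of_eq hcu)
      one_ne_zero (by rwa [hcomplu]) (fun a => by rw [hev a, hN1 a])
    exact this
  have lb0 : ∀ T : DTree n, T.Proper ∅ → (∀ a, T.eval a = if k ≤ N1 a then 1 else 0) →
      Wf ≤ ∑ a ∈ Finset.univ.filter
          (fun a : Fin n → Bool => (if k ≤ N1 a then 1 else 0) = 0),
        T.cost c a * pr p a := by
    intro T hprop hev
    rw [hfil0]
    have hev0 : ∀ a, T.eval a = if n + 1 - k ≤ Nb false Finset.univ a then 0 else 1 := by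
      intro a
      rw [hev a]
      by_cases hik : k ≤ N1 a
      · rw [if_pos hik, if_neg ((hiff a).1 hik)]
      · rw [if_neg hik, if_pos (by have h2 := hiff a; omega)]
    have := tree_lower (b := false) hp hc n Finset.univ (n + 1 - k) T 0 1 (le_of_eq hcu)
      zero_ne_one (by rwa [hcomplu]) hev0
    exact this
  -- the simultaneously optimal tree
  set T0 : DTree n := build p c Finset.univ k with hT0
  have hT0prop : T0.Proper ∅ := by
    have := build_proper p c n Finset.univ k (le_of_eq hcu)
    rwa [hcomplu] at this
  have hT0eval : ∀ a, T0.eval a = if k ≤ N1 a then 1 else 0 := by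
    intro a
    rw [hT0, build_eval p c n Finset.univ k (le_of_eq hcu) a, hN1 a]
  have hval1 : ∑ a ∈ Finset.univ.filter
        (fun a : Fin n → Bool => (if k ≤ N1 a then 1 else 0) = 1),
      T0.cost c a * pr p a = Wt := by
    rw [hfil1]
    have := build_cost_true hp hc n Finset.univ k (le_of_eq hcu)
    unfold Gsum at this
    exact this
  have hval0 : ∑ a ∈ Finset.univ.filter
        (fun a : Fin n → Bool => (if k ≤ N1 a then 1 else 0) = 0),
      T0.cost c a * pr p a = Wf := by
    rw [hfil0]
    have := build_cost_false hp hc n Finset.univ k (le_of_eq hcu)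
    rw [hcu] at this
    unfold Gsum at this
    exact this
  -- splitting the total cost
  have hsplit : ∀ T : DTree n, (∑ a : Fin n → Bool, T.cost c a * pr p a)
      = (∑ a ∈ Finset.univ.filter
            (fun a : Fin n → Bool => (if k ≤ N1 a then 1 else 0) = 1),
          T.cost c a * pr p a)
        + (∑ a ∈ Finset.univ.filter
            (fun a : Fin n → Bool => (if k ≤ N1 a then 1 else 0) = 0),
          T.cost c a * pr p a) := by
    intro T
    rw [← Finset.sum_filter_add_sum_filter_not Finset.univ
      (fun a : Fin n → Bool => (if k ≤ N1 a then 1 else 0) = 1)]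
    congr 1
    have hfn : Finset.univ.filter (fun a : Fin n → Bool => ¬ (if k ≤ N1 a then 1 else 0) = 1)
        = Finset.univ.filter (fun a : Fin n → Bool => (if k ≤ N1 a then 1 else 0) = 0) := by
      apply Finset.filter_congr
      intro a _
      by_cases hik : k ≤ N1 a <;> simp [hik]
    rw [hfn]
  -- compute the three infima
  have h1 : minLCost p c (fun a => if k ≤ N1 a then 1 else 0) 1 = Wt := by
    apply IsLeast.csInf_eq
    constructor
    · exact ⟨T0, hT0prop, hT0eval, hval1.symm⟩
    · rintro x ⟨T, hprop, hev, rfl⟩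
      exact lb1 T hprop hev
  have h0 : minLCost p c (fun a => if k ≤ N1 a then 1 else 0) 0 = Wf := by
    apply IsLeast.csInf_eq
    constructor
    · exact ⟨T0, hT0prop, hT0eval, hval0.symm⟩
    · rintro x ⟨T, hprop, hev, rfl⟩
      exact lb0 T hprop hev
  have hOPT : OPTcost p c (fun a => if k ≤ N1 a then 1 else 0) = Wt + Wf := by
    apply IsLeast.csInf_eq
    constructor
    · exact ⟨T0, hT0prop, hT0eval, by rw [hsplit T0, hval1, hval0]⟩
    · rintro x ⟨T, hprop, hev, rfl⟩
      rw [hsplit T]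
      exact add_le_add (lb1 T hprop hev) (lb0 T hprop hev)
  rw [hOPT, h0, h1]
  ring
end
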